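/- arXiv:2112.07499 — 9 statements merged into one kernel-verified Lean document; each statement's English description precedes it below -/
import Mathlib

section
/- Let G be a permutation graph on vertex set {1,…,n} determined by a permutation σ, and let P = (v_1, v_2, …, v_l) be a shortest path in G. Then for every i with 2 ≤ i ≤ l−1, the edges (v_{i−1}, v_i) and (v_i, v_{i+1}) are of different types: one is of L-type and the other is of R-type. -/
/-- The permutation graph on vertex set `Fin n` determined by a permutation `σ`:
vertices `i < j` are adjacent iff `σ j < σ i`. -/
def permGraph {n : ℕ} (σ : Equiv.Perm (Fin n)) : SimpleGraph (Fin n) where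
  Adj i j := (i < j ∧ σ j < σ i) ∨ (j < i ∧ σ i < σ j)
  symm := ⟨by intro i j h; tauto⟩
  loopless := ⟨by intro i h; rcases h with ⟨h, _⟩ | ⟨h, _⟩ <;> exact absurd h (lt_irrefl i)⟩

lemma support_getD_eq_getVert {V : Type*} {G : SimpleGraph V} {u v : V}
    (P : G.Walk u v) (i : ℕ) (hi : i ≤ P.length) (d : V) :
    P.support.getD i d = P.getVert i := by
  induction P generalizing i with
  | nil =>
      simp only [SimpleGraph.Walk.length_nil, Nat.le_zero] at hi
      subst hi; simp
  | cons h p ih =>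
      cases i with
      | zero => simp [SimpleGraph.Walk.getVert]
      | succ i =>
          simp only [SimpleGraph.Walk.support_cons, List.getD_cons_succ,
            SimpleGraph.Walk.getVert_cons_succ]
          exact ih i (by simpa using hi)

lemma shortcut {V : Type*} {G : SimpleGraph V} {u v : V} :
    ∀ (P : G.Walk u v) (i : ℕ), i + 2 ≤ P.length →
    G.Adj (P.getVert i) (P.getVert (i + 2)) →
    ∃ Q : G.Walk u v, Q.length + 1 = P.length := by
  intro P
  induction P with
  | nil => intro i h; simp at h
  | cons h p ih =>
      intro i hi hadj
      cases i with
      | zero =>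
          cases p with
          | nil => simp at hi
          | cons h' p' =>
              simp only [show (0 + 2 : ℕ) = 0 + 1 + 1 from rfl,
                SimpleGraph.Walk.getVert_cons_succ,
                SimpleGraph.Walk.getVert_zero] at hadj
              exact ⟨SimpleGraph.Walk.cons hadj p', by simp⟩
      | succ i =>
          obtain ⟨Q, hQ⟩ := ih i (by simpa using hi)
            (by simpa [SimpleGraph.Walk.getVert_cons_succ] using hadj)
          exact ⟨SimpleGraph.Walk.cons h Q, by simp [hQ]⟩

/-- In a permutation graph, along any shortest path the edges alternate types:
for consecutive edges `(v_i, v_{i+1})` and `(v_{i+1}, v_{i+2})`, one is of L-type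
(next vertex smaller) and the other is of R-type (next vertex larger). -/
theorem permGraph_shortestPath_edges_alternate {n : ℕ} (σ : Equiv.Perm (Fin n))
    {u v : Fin n} (P : (permGraph σ).Walk u v) (hpath : P.IsPath)
    (hshort : P.length = (permGraph σ).dist u v)
    (i : ℕ) (hi : i + 2 ≤ P.length) :
    (P.support.getD (i + 1) u < P.support.getD i u ∧
        P.support.getD (i + 1) u < P.support.getD (i + 2) u) ∨
      (P.support.getD i u < P.support.getD (i + 1) u ∧
        P.support.getD (i + 2) u < P.support.getD (i + 1) u) := by
  rw [support_getD_eq_getVert P i (by omega), support_getD_eq_getVert P (i+1) (by omega),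
    support_getD_eq_getVert P (i+2) (by omega)]
  set a := P.getVert i
  set b := P.getVert (i + 1)
  set c := P.getVert (i + 2)
  have hab : (permGraph σ).Adj a b := P.adj_getVert_succ (by omega)
  have hbc : (permGraph σ).Adj b c := by
    have := P.adj_getVert_succ (i := i + 1) (by omega)
    simpa using this
  have hnac : ¬ (permGraph σ).Adj a c := by
    intro hac
    obtain ⟨Q, hQ⟩ := shortcut P i hi hac
    have hle : (permGraph σ).dist u v ≤ Q.length := SimpleGraph.dist_le Q
    omega
  rcases hab with ⟨h1, h2⟩ | ⟨h1, h2⟩ <;> rcases hbc with ⟨h3, h4⟩ | ⟨h3, h4⟩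
  · exact absurd (Or.inl ⟨lt_trans h1 h3, lt_trans h4 h2⟩) hnac
  · exact Or.inr ⟨h1, h3⟩
  · exact Or.inl ⟨h1, h3⟩
  · exact absurd (Or.inr ⟨lt_trans h3 h1, lt_trans h2 h4⟩) hnac
end

section
/- Let G be a permutation graph on vertex set {1,…,n} determined by a permutation σ, let s and t be vertices with graph distance d(s,t) ≥ 3, and let P = (s = v_1, v_2, …, v_l = t) be an s–t shortest path. If P′ is an s–t shortest path obtained from P by a single reconfiguration step (changing exactly one internal vertex), then the first edge of P′ (the edge incident to s) has the same type (L-type or R-type) as the first edge of P. -/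
/-- Two lists (vertex sequences) differ in exactly one position. -/
def OneStep {α : Type*} (l₁ l₂ : List α) : Prop :=
  l₁.length = l₂.length ∧ ∃ i : ℕ, l₁[i]? ≠ l₂[i]? ∧ ∀ j, j ≠ i → l₁[j]? = l₂[j]?

lemma permGraph_adj {n : ℕ} (σ : Equiv.Perm (Fin n)) {i j : Fin n} :
    (permGraph σ).Adj i j ↔ ((i < j ∧ σ j < σ i) ∨ (j < i ∧ σ i < σ j)) := Iff.rfl

lemma permGraph_key {n : ℕ} (σ : Equiv.Perm (Fin n)) {s a b w x : Fin n}
    (hab : a ≠ b)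
    (hsa : (permGraph σ).Adj s a) (hsb : (permGraph σ).Adj s b)
    (haw : (permGraph σ).Adj a w) (hbw : (permGraph σ).Adj b w)
    (hwx : (permGraph σ).Adj w x)
    (hsw : ¬ (permGraph σ).Adj s w) (hsx : ¬ (permGraph σ).Adj s x)
    (hax : ¬ (permGraph σ).Adj a x) (hbx : ¬ (permGraph σ).Adj b x) :
    (a < s ↔ b < s) := by
  have inj : ∀ u v : Fin n, ((u : ℕ) = v ↔ ((σ u : Fin n) : ℕ) = ((σ v : Fin n) : ℕ)) := by
    intro u v
    rw [Fin.val_eq_val, Fin.val_eq_val, EmbeddingLike.apply_eq_iff_eq]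
  have hab' : (a : ℕ) ≠ b := by simpa [Fin.val_eq_val] using hab
  have i1 := inj s a; have i2 := inj s b; have i3 := inj s w; have i4 := inj s x
  have i5 := inj a b; have i6 := inj a w; have i7 := inj a x
  have i8 := inj b w; have i9 := inj b x; have i10 := inj w x
  rw [permGraph_adj] at hsa hsb haw hbw hwx hsw hsx hax hbx
  simp only [Fin.lt_def] at hsa hsb haw hbw hwx hsw hsx hax hbx ⊢
  omega

/-- In a permutation graph, a single reconfiguration step between `s`–`t` shortest
paths (with `d(s,t) ≥ 3`) preserves the type (L-type or R-type) of the first edge: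
the first edge of `P` is L-type (i.e. its second vertex is smaller than `s`) iff the
first edge of `P'` is. -/
theorem permGraph_step_preserves_first_edge_type {n : ℕ} (σ : Equiv.Perm (Fin n))
    {s t : Fin n} (hd : 3 ≤ (permGraph σ).dist s t)
    (P P' : (permGraph σ).Walk s t)
    (hP : P.length = (permGraph σ).dist s t)
    (hP' : P'.length = (permGraph σ).dist s t)
    (hstep : OneStep P.support P'.support) :
    (P.support.getD 1 s < s ↔ P'.support.getD 1 s < s) := by
  obtain ⟨hlen, i, hne, hagree⟩ := hstep
  by_cases hi : i = 1
  · subst hi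
    -- decompose P
    cases P with
    | nil => rw [SimpleGraph.Walk.length_nil] at hP; omega
    | cons hsa P₁ =>
      cases P₁ with
      | nil => rw [SimpleGraph.Walk.length_cons, SimpleGraph.Walk.length_nil] at hP; omega
      | cons haw P₂ =>
        cases P₂ with
        | nil =>
          rw [SimpleGraph.Walk.length_cons, SimpleGraph.Walk.length_cons,
            SimpleGraph.Walk.length_nil] at hP; omega
        | cons hwx P₃ =>
          cases P' with
          | nil => rw [SimpleGraph.Walk.length_nil] at hP'; omega
          | cons hsb P₁' =>
            cases P₁' with
            | nil =>
              rw [SimpleGraph.Walk.length_cons, SimpleGraph.Walk.length_nil] at hP'; omega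
            | cons hbw P₂' =>
              cases P₂' with
              | nil =>
                rw [SimpleGraph.Walk.length_cons, SimpleGraph.Walk.length_cons,
                  SimpleGraph.Walk.length_nil] at hP'; omega
              | cons hwx' P₃' =>
                rename_i a w x b w' x'
                -- extract equalities of positions 2 and 3
                have h2 := hagree 2 (by norm_num)
                have h3 := hagree 3 (by norm_num)
                simp only [SimpleGraph.Walk.support_cons] at h2 h3 hne ⊢
                rw [P₃.support_eq_cons] at h2 h3 ⊢
                rw [P₃'.support_eq_cons] at h2 h3 ⊢
                simp only [List.getElem?_cons_succ, List.getElem?_cons_zero,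
                  Option.some.injEq] at h2 h3 hne
                subst h2; subst h3
                have hab : a ≠ b := fun h => hne (by rw [h])
                -- lengths
                simp only [SimpleGraph.Walk.length_cons] at hP hP'
                -- non-adjacency facts
                have hsw : ¬ (permGraph σ).Adj s w := by
                  intro h
                  have := SimpleGraph.dist_le (SimpleGraph.Walk.cons h (SimpleGraph.Walk.cons hwx P₃))
                  simp only [SimpleGraph.Walk.length_cons] at this
                  omega
                have hsx : ¬ (permGraph σ).Adj s x := by
                  intro h
                  have := SimpleGraph.dist_le (SimpleGraph.Walk.cons h P₃)
                  simp only [SimpleGraph.Walk.length_cons] at this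
                  omega
                have hax : ¬ (permGraph σ).Adj a x := by
                  intro h
                  have := SimpleGraph.dist_le
                    (SimpleGraph.Walk.cons hsa (SimpleGraph.Walk.cons h P₃))
                  simp only [SimpleGraph.Walk.length_cons] at this
                  omega
                have hbx : ¬ (permGraph σ).Adj b x := by
                  intro h
                  have := SimpleGraph.dist_le
                    (SimpleGraph.Walk.cons hsb (SimpleGraph.Walk.cons h P₃'))
                  simp only [SimpleGraph.Walk.length_cons] at this
                  omega
                simpa using permGraph_key σ hab hsa hsb haw hbw hwx hsw hsx hax hbx
  · have h1 := hagree 1 (fun h => hi h.symm)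
    rw [List.getD_eq_getElem?_getD, List.getD_eq_getElem?_getD, h1]
end

section
/- Let G be a permutation graph on vertex set {1,…,n} determined by a permutation σ, and let s and t be vertices with graph distance d(s,t) ≥ 3 such that t < s and σ(t) < σ(s) (t lies to the left of s). Then two s–t shortest paths P_1 and P_2 in G are reconfigurable if and only if the first edge of P_1 and the first edge of P_2 (the edges incident to s) are of the same type. -/
/-- One reconfiguration step between `s`–`t` shortest paths: both walks are shortest
and their vertex sequences differ in exactly one position. -/
def ShortestStep {V : Type*} (G : SimpleGraph V) (s t : V) (p q : G.Walk s t) : Prop :=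
  p.length = G.dist s t ∧ q.length = G.dist s t ∧ OneStep p.support q.support

/-- Two `s`–`t` shortest paths are reconfigurable if they are joined by a sequence of
`s`–`t` shortest paths in which consecutive paths differ in exactly one position. -/
def Reconfigurable {V : Type*} (G : SimpleGraph V) (s t : V) (p q : G.Walk s t) : Prop :=
  Relation.ReflTransGen (ShortestStep G s t) p q

section AuxSPR
open SimpleGraph

variable {n : ℕ} {σ : Equiv.Perm (Fin n)}

lemma pg_adj {a b : Fin n} :
    (permGraph σ).Adj a b ↔ ((a < b ∧ σ b < σ a) ∨ (b < a ∧ σ a < σ b)) := Iff.rfl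

lemma alt {a b c : Fin n} (hab : (permGraph σ).Adj a b) (hbc : (permGraph σ).Adj b c)
    (hac : ¬ (permGraph σ).Adj a c) : (b < a ↔ ¬ (c < b)) := by
  have hab' := pg_adj.mp hab
  have hbc' := pg_adj.mp hbc
  have hnab : a ≠ b := hab.ne
  have hnbc : b ≠ c := hbc.ne
  constructor
  · rintro hba hcb
    refine hac (pg_adj.mpr (Or.inr ⟨lt_trans hcb hba, ?_⟩))
    rcases hab' with ⟨h1, h2⟩ | ⟨h1, h2⟩
    · exact absurd h1 (asymm hba)
    · rcases hbc' with ⟨h3, h4⟩ | ⟨h3, h4⟩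
      · exact absurd h3 (asymm hcb)
      · exact lt_trans h2 h4
  · intro hcb
    by_contra hba
    have h1 : a < b := lt_of_le_of_ne (not_lt.mp hba) hnab
    have h2 : b < c := lt_of_le_of_ne (not_lt.mp hcb) hnbc
    refine hac (pg_adj.mpr (Or.inl ⟨lt_trans h1 h2, ?_⟩))
    rcases hab' with ⟨h3, h4⟩ | ⟨h3, h4⟩
    · rcases hbc' with ⟨h5, h6⟩ | ⟨h5, h6⟩
      · exact lt_trans h6 h4
      · exact absurd h5 (asymm h2)
    · exact absurd h3 (asymm h1)

/-- from a walk b→t with t ≺ a ≺ b, get a walk a→t no longer. -/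

lemma down_walk {a : Fin n} :
    ∀ {t b : Fin n} (w : (permGraph σ).Walk b t), t < a → σ t < σ a → a < b → σ a < σ b →
      ∃ w' : (permGraph σ).Walk a t, w'.length ≤ w.length := by
  intro t b w
  induction w with
  | nil => intro hta _ hab _; exact absurd (lt_trans hta hab) (lt_irrefl _)
  | @cons b b' t hadj w ih =>
    intro hta hσta hab hσab
    have ih := fun h1 h2 => ih hta hσta h1 h2
    rcases eq_or_ne a b' with rfl | hne
    · exact ⟨w, by simp [Walk.length_cons]⟩
    · rcases lt_trichotomy a b' with hlt | heq | hgt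
      · rcases lt_trichotomy (σ a) (σ b') with hσ | hσe | hσ
        · obtain ⟨w', hw'⟩ := ih hlt hσ
          exact ⟨w', le_trans hw' (by simp [Walk.length_cons])⟩
        · exact absurd (σ.injective hσe) hne
        · exact ⟨Walk.cons (pg_adj.mpr (Or.inl ⟨hlt, hσ⟩)) w, by simp [Walk.length_cons]⟩
      · exact absurd heq hne
      · rcases lt_trichotomy (σ a) (σ b') with hσ | hσe | hσ
        · exact ⟨Walk.cons (pg_adj.mpr (Or.inr ⟨hgt, hσ⟩)) w, by simp [Walk.length_cons]⟩
        · exact absurd (σ.injective hσe) hne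
        · rcases pg_adj.mp hadj with ⟨h1, h2⟩ | ⟨h1, h2⟩
          · exact absurd h1 (asymm (lt_trans hgt hab))
          · exact absurd h2 (asymm (lt_trans hσ hσab))

/-- from a walk a→c with a ≺ b ≺ c, get a walk b→c no longer. -/

lemma up_walk {b : Fin n} :
    ∀ {c a : Fin n} (w : (permGraph σ).Walk a c), b < c → σ b < σ c → a < b → σ a < σ b →
      ∃ w' : (permGraph σ).Walk b c, w'.length ≤ w.length := by
  intro c a w
  induction w with
  | nil => intro hbc _ hab _; exact absurd (lt_trans hab hbc) (lt_irrefl _)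
  | @cons a a' c hadj w ih =>
    intro hbc hσbc hab hσab
    have ih := fun h1 h2 => ih hbc hσbc h1 h2
    rcases eq_or_ne b a' with rfl | hne
    · exact ⟨w, by simp [Walk.length_cons]⟩
    · rcases lt_trichotomy a' b with hlt | heq | hgt
      · rcases lt_trichotomy (σ a') (σ b) with hσ | hσe | hσ
        · obtain ⟨w', hw'⟩ := ih hlt hσ
          exact ⟨w', le_trans hw' (by simp [Walk.length_cons])⟩
        · exact absurd (σ.injective hσe).symm hne
        · exact ⟨Walk.cons (pg_adj.mpr (Or.inr ⟨hlt, hσ⟩)) w, by simp [Walk.length_cons]⟩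
      · exact absurd heq.symm hne
      · rcases lt_trichotomy (σ a') (σ b) with hσ | hσe | hσ
        · exact ⟨Walk.cons (pg_adj.mpr (Or.inl ⟨hgt, hσ⟩)) w, by simp [Walk.length_cons]⟩
        · exact absurd (σ.injective hσe).symm hne
        · rcases pg_adj.mp hadj with ⟨h1, h2⟩ | ⟨h1, h2⟩
          · exact absurd h2 (asymm (lt_trans hσab hσ))
          · exact absurd h1 (asymm (lt_trans hab hgt))

lemma no_short {s t : Fin n} (w : (permGraph σ).Walk s t)
    (h : w.length < (permGraph σ).dist s t) : False :=
  absurd (SimpleGraph.dist_le w) (not_le.mpr h)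

lemma mid_facts {s t v₂ : Fin n} (hts : t < s) (hσts : σ t < σ s)
    (pp : (permGraph σ).Walk v₂ t) (hlen : pp.length + 2 = (permGraph σ).dist s t) :
    ¬ (permGraph σ).Adj s v₂ ∧ v₂ < s ∧ σ v₂ < σ s := by
  have hna : ¬ (permGraph σ).Adj s v₂ := fun ha =>
    no_short (Walk.cons ha pp) (by simp only [Walk.length_cons]; omega)
  have hne : s ≠ v₂ := by rintro rfl; exact no_short pp (by omega)
  rcases lt_trichotomy v₂ s with h | h | h
  · refine ⟨hna, h, ?_⟩
    rcases lt_trichotomy (σ v₂) (σ s) with hσ | hσ | hσ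
    · exact hσ
    · exact absurd (σ.injective hσ).symm hne
    · exact absurd (pg_adj.mpr (Or.inr ⟨h, hσ⟩)) hna
  · exact absurd h.symm hne
  · exfalso
    rcases lt_trichotomy (σ s) (σ v₂) with hσ | hσ | hσ
    · obtain ⟨w', hw'⟩ := down_walk pp hts hσts h hσ
      exact no_short w' (by omega)
    · exact absurd (σ.injective hσ) hne
    · exact absurd (pg_adj.mpr (Or.inl ⟨h, hσ⟩)) hna

lemma t_facts {s t a : Fin n} (hk3 : 3 ≤ (permGraph σ).dist s t) (hts : t < s) (hσts : σ t < σ s)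
    (h1 : (permGraph σ).Adj s a) (p : (permGraph σ).Walk a t)
    (hlen : p.length + 1 = (permGraph σ).dist s t) :
    (t < a ∧ σ t < σ a) ∧ (permGraph σ).dist a t + 1 = (permGraph σ).dist s t := by
  have hnat : ¬ (permGraph σ).Adj a t := fun ha =>
    no_short (Walk.cons h1 (Walk.cons ha Walk.nil)) (by simp only [Walk.length_cons, Walk.length_nil]; omega)
  have hne : a ≠ t := by rintro rfl; exact no_short (Walk.cons h1 Walk.nil) (by simp only [Walk.length_cons, Walk.length_nil]; omega)
  refine ⟨?_, ?_⟩
  · rcases lt_trichotomy t a with h | h | h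
    · refine ⟨h, ?_⟩
      rcases lt_trichotomy (σ t) (σ a) with hσ | hσ | hσ
      · exact hσ
      · exact absurd (σ.injective hσ).symm hne
      · exact absurd (pg_adj.mpr (Or.inr ⟨h, hσ⟩)) hnat
    · exact absurd h.symm hne
    · exfalso
      rcases lt_trichotomy (σ a) (σ t) with hσ | hσ | hσ
      · obtain ⟨w', hw'⟩ := up_walk (Walk.cons h1 Walk.nil).reverse hts hσts h hσ
        exact no_short w'.reverse (by
          simp only [Walk.length_reverse] at *
          simp only [Walk.length_cons, Walk.length_nil] at hw'
          omega)
      · exact absurd (σ.injective hσ) hne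
      · exact absurd (pg_adj.mpr (Or.inl ⟨h, hσ⟩)) hnat
  · have hle : (permGraph σ).dist a t ≤ p.length := SimpleGraph.dist_le p
    obtain ⟨q, hq⟩ := SimpleGraph.Reachable.exists_walk_length_eq_dist ⟨p⟩
    have h2 := SimpleGraph.dist_le (Walk.cons h1 q)
    simp only [Walk.length_cons] at h2
    omega

lemma oneStep_cons {α : Type*} {l₁ l₂ : List α} (a : α) (h : OneStep l₁ l₂) :
    OneStep (a :: l₁) (a :: l₂) := by
  obtain ⟨hl, i, hne, hoth⟩ := h
  refine ⟨by simp [hl], i+1, by simpa using hne, ?_⟩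
  rintro (_|j) hj
  · simp
  · simpa using hoth j (by omega)

lemma oneStep_two {α : Type*} {a b s : α} (l : List α) (hab : a ≠ b) :
    OneStep (s :: a :: l) (s :: b :: l) := by
  refine ⟨by simp, 1, by simp [hab], ?_⟩
  rintro (_|_|j) hj
  · simp
  · exact absurd rfl hj
  · simp

lemma second_eq {s v t : Fin n} (h : (permGraph σ).Adj s v) (p : (permGraph σ).Walk v t)
    (x : Fin n) : (Walk.cons h p).support.getD 1 x = v := by
  rw [Walk.support_cons, p.support_eq_cons]
  rfl

lemma step_cons {s v t : Fin n} (h : (permGraph σ).Adj s v)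
    (hdv : (permGraph σ).dist v t + 1 = (permGraph σ).dist s t)
    {p q : (permGraph σ).Walk v t} (st : ShortestStep (permGraph σ) v t p q) :
    ShortestStep (permGraph σ) s t (Walk.cons h p) (Walk.cons h q) := by
  obtain ⟨l1, l2, os⟩ := st
  refine ⟨?_, ?_, ?_⟩
  · simp only [Walk.length_cons, l1]; omega
  · simp only [Walk.length_cons, l2]; omega
  · simp only [Walk.support_cons]
    exact oneStep_cons s os

lemma main_recon : ∀ k : ℕ, 2 ≤ k → ∀ s t : Fin n, t < s → σ t < σ s →
    (permGraph σ).dist s t = k →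
    ∀ P Q : (permGraph σ).Walk s t, P.length = k → Q.length = k →
    ((P.support.getD 1 s < s) ↔ (Q.support.getD 1 s < s)) →
    Reconfigurable (permGraph σ) s t P Q := by
  intro k
  induction k using Nat.strong_induction_on with
  | _ k IH =>
  intro hk s t hts hσts hdist P Q hP hQ hsame
  cases P with
  | nil => exact absurd hts (lt_irrefl _)
  | @cons _ v₁ _ ha1 p =>
  cases p with
  | nil => rw [Walk.length_cons, Walk.length_nil] at hP; omega
  | @cons _ v₂ _ ha2 pp =>
  cases Q with
  | nil => exact absurd hts (lt_irrefl _)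
  | @cons _ u₁ _ hb1 q =>
  cases q with
  | nil => rw [Walk.length_cons, Walk.length_nil] at hQ; omega
  | @cons _ u₂ _ hb2 qq =>
  have hP' : (Walk.cons ha1 (Walk.cons ha2 pp)).length = (permGraph σ).dist s t := by
    rw [hP, hdist]
  have hQ' : (Walk.cons hb1 (Walk.cons hb2 qq)).length = (permGraph σ).dist s t := by
    rw [hQ, hdist]
  simp only [Walk.length_cons] at hP hQ
  rw [second_eq ha1, second_eq hb1] at hsame
  rcases (by omega : k = 2 ∨ 3 ≤ k) with hk2 | hk3
  · -- base case, distance 2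
    subst hk2
    cases pp with
    | nil =>
      cases qq with
      | nil =>
        by_cases hv : v₁ = u₁
        · subst hv
          exact Relation.ReflTransGen.refl
        · refine Relation.ReflTransGen.single ⟨hP', hQ', ?_⟩
          simp only [Walk.support_cons, Walk.support_nil]
          exact oneStep_two _ hv
      | cons _ _ => simp only [Walk.length_cons] at hQ; omega
    | cons _ _ => simp only [Walk.length_cons] at hP; omega
  · -- distance at least 3
    obtain ⟨hnsv₂, hv₂s, hσv₂s⟩ := mid_facts hts hσts pp (by omega)
    obtain ⟨hnsu₂, hu₂s, hσu₂s⟩ := mid_facts hts hσts qq (by omega)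
    have altP := alt ha1 ha2 hnsv₂
    have altQ := alt hb1 hb2 hnsu₂
    have key : ∀ (a b c : Fin n) (h1 : (permGraph σ).Adj s a) (h2 : (permGraph σ).Adj a b)
        (h3 : (permGraph σ).Adj a c) (pb : (permGraph σ).Walk b t) (pc : (permGraph σ).Walk c t),
        pb.length + 2 = k → pc.length + 2 = k →
        Relation.ReflTransGen (ShortestStep (permGraph σ) s t)
          (Walk.cons h1 (Walk.cons h2 pb)) (Walk.cons h1 (Walk.cons h3 pc)) := by
      intro a b c h1 h2 h3 pb pc hlb hlc
      obtain ⟨⟨hta, hσta⟩, hda⟩ := t_facts (by omega) hts hσts h1 (Walk.cons h2 pb)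
        (by simp only [Walk.length_cons]; omega)
      obtain ⟨hnsb, -, -⟩ := mid_facts hts hσts pb (by omega)
      obtain ⟨hnsc, -, -⟩ := mid_facts hts hσts pc (by omega)
      have altb := alt h1 h2 hnsb
      have altc := alt h1 h3 hnsc
      have hrec := IH (k-1) (by omega) (by omega) a t hta hσta (by omega)
        (Walk.cons h2 pb) (Walk.cons h3 pc)
        (by simp only [Walk.length_cons]; omega) (by simp only [Walk.length_cons]; omega)
        (by rw [second_eq h2, second_eq h3]; tauto)
      exact Relation.ReflTransGen.lift (Walk.cons h1)
        (fun x y hxy => step_cons h1 (by omega) hxy) _ _ hrec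
    by_cases hv : v₁ = u₁
    · subst hv
      exact key v₁ v₂ u₂ ha1 ha2 hb2 pp qq (by omega) (by omega)
    · rcases pg_adj.mp ha1 with ⟨hsv, hσvs⟩ | ⟨hvs, hσsv⟩
      · -- R type: s < v₁, σ v₁ < σ s
        have hnus : ¬ (u₁ < s) := fun h => (asymm hsv : ¬ v₁ < s) (hsame.mpr h)
        have hsu : s < u₁ := lt_of_le_of_ne (not_lt.mp hnus) hb1.ne
        have hσus : σ u₁ < σ s := by
          rcases pg_adj.mp hb1 with ⟨_, h'⟩ | ⟨h', _⟩
          · exact h'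
          · exact absurd h' (asymm hsu)
        have hv₂v₁ : v₂ < v₁ := by
          by_contra hh
          exact (asymm hsv : ¬ v₁ < s) (altP.mpr hh)
        have hσv₁v₂ : σ v₁ < σ v₂ := by
          rcases pg_adj.mp ha2 with ⟨h', _⟩ | ⟨_, h'⟩
          · exact absurd h' (asymm hv₂v₁)
          · exact h'
        have hu₂u₁ : u₂ < u₁ := by
          by_contra hh
          exact (asymm hsu : ¬ u₁ < s) (altQ.mpr hh)
        have hσu₁u₂ : σ u₁ < σ u₂ := by
          rcases pg_adj.mp hb2 with ⟨h', _⟩ | ⟨_, h'⟩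
          · exact absurd h' (asymm hu₂u₁)
          · exact h'
        have hσne : σ v₁ ≠ σ u₁ := fun h => hv (σ.injective h)
        rcases lt_or_gt_of_ne hσne with hσvu | hσuv
        · -- step Q: replace u₁ by v₁
          have hadj : (permGraph σ).Adj v₁ u₂ :=
            pg_adj.mpr (Or.inr ⟨lt_trans hu₂s hsv, lt_trans hσvu hσu₁u₂⟩)
          refine Relation.ReflTransGen.tail
            (key v₁ v₂ u₂ ha1 ha2 hadj pp qq (by omega) (by omega)) ?_
          refine ⟨by simp only [Walk.length_cons]; omega, hQ', ?_⟩
          simp only [Walk.support_cons]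
          exact oneStep_two _ hv
        · -- step P: replace v₁ by u₁
          have hadj : (permGraph σ).Adj u₁ v₂ :=
            pg_adj.mpr (Or.inr ⟨lt_trans hv₂s hsu, lt_trans hσuv hσv₁v₂⟩)
          refine Relation.ReflTransGen.head
            (?_ : ShortestStep (permGraph σ) s t _ (Walk.cons hb1 (Walk.cons hadj pp)))
            (key u₁ v₂ u₂ hb1 hadj hb2 pp qq (by omega) (by omega))
          refine ⟨hP', by simp only [Walk.length_cons]; omega, ?_⟩
          simp only [Walk.support_cons]
          exact oneStep_two _ hv
      · -- L type: v₁ < s, σ s < σ v₁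
        have hus : u₁ < s := hsame.mp hvs
        have hσsu : σ s < σ u₁ := by
          rcases pg_adj.mp hb1 with ⟨h', _⟩ | ⟨_, h'⟩
          · exact absurd h' (asymm hus)
          · exact h'
        have hv₁v₂ : v₁ < v₂ := lt_of_le_of_ne (not_lt.mp (altP.mp hvs)) (ha2.ne)
        have hσv₂v₁ : σ v₂ < σ v₁ := by
          rcases pg_adj.mp ha2 with ⟨_, h'⟩ | ⟨h', _⟩
          · exact h'
          · exact absurd h' (asymm hv₁v₂)
        have hu₁u₂ : u₁ < u₂ := lt_of_le_of_ne (not_lt.mp (altQ.mp hus)) (hb2.ne)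
        have hσu₂u₁ : σ u₂ < σ u₁ := by
          rcases pg_adj.mp hb2 with ⟨_, h'⟩ | ⟨h', _⟩
          · exact h'
          · exact absurd h' (asymm hu₁u₂)
        rcases lt_or_gt_of_ne hv with hvu | huv
        · -- v₁ < u₁ : step Q: replace u₁ by v₁
          have hadj : (permGraph σ).Adj v₁ u₂ :=
            pg_adj.mpr (Or.inl ⟨lt_trans hvu hu₁u₂, lt_trans hσu₂s hσsv⟩)
          refine Relation.ReflTransGen.tail
            (key v₁ v₂ u₂ ha1 ha2 hadj pp qq (by omega) (by omega)) ?_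
          refine ⟨by simp only [Walk.length_cons]; omega, hQ', ?_⟩
          simp only [Walk.support_cons]
          exact oneStep_two _ hv
        · -- u₁ < v₁ : step P: replace v₁ by u₁
          have hadj : (permGraph σ).Adj u₁ v₂ :=
            pg_adj.mpr (Or.inl ⟨lt_trans huv hv₁v₂, lt_trans hσv₂s hσsu⟩)
          refine Relation.ReflTransGen.head
            (?_ : ShortestStep (permGraph σ) s t _ (Walk.cons hb1 (Walk.cons hadj pp)))
            (key u₁ v₂ u₂ hb1 hadj hb2 pp qq (by omega) (by omega))
          refine ⟨hP', by simp only [Walk.length_cons]; omega, ?_⟩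
          simp only [Walk.support_cons]
          exact oneStep_two _ hv

lemma step_type {s t : Fin n} (hk3 : 3 ≤ (permGraph σ).dist s t)
    {p q : (permGraph σ).Walk s t} (st : ShortestStep (permGraph σ) s t p q) :
    (p.support.getD 1 s < s ↔ q.support.getD 1 s < s) := by
  obtain ⟨hp, hq, hl, i, hne, hoth⟩ := st
  cases p with
  | nil => rw [SimpleGraph.dist_self] at hk3; omega
  | @cons _ v₁ _ a1 p =>
  cases p with
  | nil => rw [Walk.length_cons, Walk.length_nil] at hp; omega
  | @cons _ v₂ _ a2 p =>
  cases p with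
  | nil => rw [Walk.length_cons, Walk.length_cons, Walk.length_nil] at hp; omega
  | @cons _ v₃ _ a3 p3 =>
  cases q with
  | nil => rw [SimpleGraph.dist_self] at hk3; omega
  | @cons _ u₁ _ b1 q =>
  cases q with
  | nil => rw [Walk.length_cons, Walk.length_nil] at hq; omega
  | @cons _ u₂ _ b2 q =>
  cases q with
  | nil => rw [Walk.length_cons, Walk.length_cons, Walk.length_nil] at hq; omega
  | @cons _ u₃ _ b3 q3 =>
  simp only [Walk.length_cons] at hp hq
  rw [second_eq a1, second_eq b1]
  rcases i with _ | _ | i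
  · -- position 0 : both are s
    simp only [Walk.support_cons, List.getElem?_cons_zero] at hne
    exact absurd rfl hne
  · -- position 1 : second vertices differ, use alternation through positions 2,3
    have h2 := hoth 2 (by omega)
    have h3 := hoth 3 (by omega)
    simp only [Walk.support_cons, List.getElem?_cons_zero, List.getElem?_cons_succ,
      Option.some.injEq] at h2 h3
    rw [p3.support_eq_cons, q3.support_eq_cons] at h3
    simp only [List.getElem?_cons_zero, Option.some.injEq] at h3
    subst h2; subst h3
    have hnsv₂ : ¬ (permGraph σ).Adj s v₂ := fun ha =>
      no_short (Walk.cons ha (Walk.cons a3 p3)) (by simp only [Walk.length_cons]; omega)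
    have hnv₁v₃ : ¬ (permGraph σ).Adj v₁ v₃ := fun ha =>
      no_short (Walk.cons a1 (Walk.cons ha p3)) (by simp only [Walk.length_cons]; omega)
    have hnsu₂ : ¬ (permGraph σ).Adj s v₂ := fun ha =>
      no_short (Walk.cons ha (Walk.cons b3 q3)) (by simp only [Walk.length_cons]; omega)
    have hnu₁u₃ : ¬ (permGraph σ).Adj u₁ v₃ := fun ha =>
      no_short (Walk.cons b1 (Walk.cons ha q3)) (by simp only [Walk.length_cons]; omega)
    have ap1 := alt a1 a2 hnsv₂
    have ap2 := alt a2 a3 hnv₁v₃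
    have aq1 := alt b1 b2 hnsu₂
    have aq2 := alt b2 b3 hnu₁u₃
    tauto
  · -- position ≥ 2 : second vertices agree
    have h1 := hoth 1 (by omega)
    simp only [Walk.support_cons, List.getElem?_cons_zero, List.getElem?_cons_succ,
      Option.some.injEq] at h1
    rw [h1]

lemma recon_type {s t : Fin n} (hd : 3 ≤ (permGraph σ).dist s t)
    {p q : (permGraph σ).Walk s t}
    (h : Relation.ReflTransGen (ShortestStep (permGraph σ) s t) p q) :
    (p.support.getD 1 s < s ↔ q.support.getD 1 s < s) := by
  induction h with
  | refl => exact Iff.rfl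
  | tail _ hstep ih => exact ih.trans (step_type hd hstep)

end AuxSPR

/-- In a permutation graph with `d(s,t) ≥ 3` and `t` to the left of `s`, two `s`–`t`
shortest paths are reconfigurable iff their first edges are of the same type. -/
theorem permGraph_reconfigurable_iff_same_first_edge_type {n : ℕ} (σ : Equiv.Perm (Fin n))
    {s t : Fin n} (hd : 3 ≤ (permGraph σ).dist s t)
    (hts : t < s) (hσts : σ t < σ s)
    (P₁ P₂ : (permGraph σ).Walk s t)
    (hP₁ : P₁.length = (permGraph σ).dist s t)
    (hP₂ : P₂.length = (permGraph σ).dist s t) :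
    Reconfigurable (permGraph σ) s t P₁ P₂ ↔
      (P₁.support.getD 1 s < s ↔ P₂.support.getD 1 s < s) := by
  constructor
  · intro hrec
    exact recon_type hd hrec
  · intro hsame
    exact main_recon ((permGraph σ).dist s t) (by omega) s t hts hσts rfl P₁ P₂ hP₁ hP₂ hsame
end

section
/- Let G be a connected bridged graph and let s, t be vertices of G. Then any two s–t shortest paths in G are reconfigurable. -/
/-- The interval `I(u,v)`: all vertices lying on at least one shortest `u`–`v` path. -/
def interval {V : Type*} (G : SimpleGraph V) (u v : V) : Set V :=
  {w : V | G.dist u w + G.dist w v = G.dist u v}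

/-- A set of vertices is convex if it contains the interval between any two of its
vertices. -/
def IsConvexSet {V : Type*} (G : SimpleGraph V) (H : Set V) : Prop :=
  ∀ u ∈ H, ∀ v ∈ H, interval G u v ⊆ H

/-- A graph is bridged if the neighbourhood of every convex set is convex. -/
def Bridged {V : Type*} (G : SimpleGraph V) : Prop :=
  ∀ H : Set V, IsConvexSet G H →
    IsConvexSet G {v : V | ∃ h ∈ H, G.dist v h ≤ 1}

namespace BridgedAux

open SimpleGraph

variable {V : Type*} {G : SimpleGraph V}

lemma singleton_convex (hconn : G.Connected) (w : V) : IsConvexSet G {w} := by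
  intro a ha b hb x hx
  rw [Set.mem_singleton_iff] at ha hb
  simp only [interval, Set.mem_setOf_eq] at hx
  rw [ha, hb, SimpleGraph.dist_self] at hx
  have h0 : G.dist w x = 0 := by omega
  exact Set.mem_singleton_iff.mpr ((hconn w x).dist_eq_zero_iff.mp h0).symm

lemma exists_adj_dist (hconn : G.Connected) {v w : V} {k : ℕ} (h : G.dist v w = k + 1) :
    ∃ x, G.Adj v x ∧ G.dist x w = k := by
  obtain ⟨p, hp⟩ := hconn.exists_walk_length_eq_dist v w
  cases p with
  | nil => rw [h] at hp; simp at hp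
  | @cons _ x _ hadj q =>
    refine ⟨x, hadj, ?_⟩
    have hq : q.length = k := by
      rw [h] at hp; simpa using hp
    have h1 : G.dist x w ≤ k := hq ▸ SimpleGraph.dist_le q
    have h2 : G.dist v w ≤ G.dist v x + G.dist x w := hconn.dist_triangle
    have h3 : G.dist v x ≤ 1 := by simpa using SimpleGraph.dist_le hadj.toWalk
    omega

lemma ball_convex (hconn : G.Connected) (hbr : Bridged G) (w : V) :
    ∀ k : ℕ, IsConvexSet G {v | G.dist v w ≤ k}
  | 0 => by
    have hset : {v | G.dist v w ≤ 0} = {w} := by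
      ext v
      simp only [Set.mem_setOf_eq, Nat.le_zero, Set.mem_singleton_iff]
      exact (hconn v w).dist_eq_zero_iff
    rw [hset]; exact singleton_convex hconn w
  | (k + 1) => by
    have hc := hbr _ (ball_convex hconn hbr w k)
    have heq : {v : V | ∃ h ∈ {v | G.dist v w ≤ k}, G.dist v h ≤ 1}
        = {v | G.dist v w ≤ k + 1} := by
      ext v
      constructor
      · rintro ⟨h, hh, hvh⟩
        simp only [Set.mem_setOf_eq] at hh ⊢
        have := hconn.dist_triangle (u := v) (v := h) (w := w)
        omega
      · intro hv
        simp only [Set.mem_setOf_eq] at hv ⊢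
        rcases Nat.lt_or_ge (G.dist v w) (k + 1) with h | h
        · refine ⟨v, ?_, ?_⟩
          · show G.dist v w ≤ k; omega
          · simp [SimpleGraph.dist_self]
        · have hvw : G.dist v w = k + 1 := le_antisymm hv h
          obtain ⟨x, hx, hxd⟩ := exists_adj_dist hconn hvw
          refine ⟨x, ?_, ?_⟩
          · show G.dist x w ≤ k; omega
          · simpa using SimpleGraph.dist_le hx.toWalk
    rwa [heq] at hc

lemma pair_convex (hconn : G.Connected) {u v : V} (huv : G.Adj u v) :
    IsConvexSet G {u, v} := by
  have key : ∀ a b x : V, G.dist a b ≤ 1 → x ∈ interval G a b → x = a ∨ x = b := by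
    intro a b x hab hx
    simp only [interval, Set.mem_setOf_eq] at hx
    rcases Nat.eq_zero_or_pos (G.dist a x) with h0 | hpos
    · exact Or.inl ((hconn a x).dist_eq_zero_iff.mp h0).symm
    · have h0 : G.dist x b = 0 := by omega
      exact Or.inr ((hconn x b).dist_eq_zero_iff.mp h0)
  intro a ha b hb x hx
  have hab : G.dist a b ≤ 1 := by
    rcases ha with rfl | rfl <;> rcases hb with rfl | rfl
    · simp [SimpleGraph.dist_self]
    · exact le_of_eq (SimpleGraph.dist_eq_one_iff_adj.mpr huv)
    · exact le_of_eq (SimpleGraph.dist_eq_one_iff_adj.mpr huv.symm)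
    · simp [SimpleGraph.dist_self]
  rcases key a b x hab hx with rfl | rfl
  · exact ha
  · exact hb

lemma dcomm (a b : V) : G.dist a b = G.dist b a := SimpleGraph.dist_comm

lemma dist_adj (h : G.Adj a b) : G.dist a b = 1 :=
  SimpleGraph.dist_eq_one_iff_adj.mpr h

lemma adj_of_dist_one (h : G.dist a b = 1) : G.Adj a b :=
  SimpleGraph.dist_eq_one_iff_adj.mp h

lemma eq_of_dist_zero (hconn : G.Connected) (h : G.dist a b = 0) : a = b :=
  (hconn a b).dist_eq_zero_iff.mp h

lemma triangle_condition (hconn : G.Connected) (hbr : Bridged G) {u v w : V} {k : ℕ}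
    (huv : G.Adj u v) (hu : G.dist u w = k + 1) (hv : G.dist v w = k + 1) :
    ∃ z, G.Adj u z ∧ G.Adj v z ∧ G.dist z w = k := by
  by_contra hcon
  push_neg at hcon
  obtain ⟨x, hux, hxw⟩ := exists_adj_dist hconn hu
  obtain ⟨y, hvy, hyw⟩ := exists_adj_dist hconn hv
  have hdux : G.dist u x = 1 := dist_adj hux
  have hdvy : G.dist v y = 1 := dist_adj hvy
  have hduv : G.dist u v = 1 := dist_adj huv
  -- d(x,v) = 2
  have hxv : G.dist x v = 2 := by
    have hle : G.dist x v ≤ 2 := by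
      have := hconn.dist_triangle (u := x) (v := u) (w := v)
      rw [dcomm x u] at this; omega
    have hne0 : G.dist x v ≠ 0 := fun h0 => by
      rw [eq_of_dist_zero hconn h0] at hxw; omega
    have hne1 : G.dist x v ≠ 1 := fun h1 =>
      hcon x hux (adj_of_dist_one (by rw [dcomm]; exact h1)) hxw
    omega
  -- d(y,u) = 2
  have hyu : G.dist y u = 2 := by
    have hle : G.dist y u ≤ 2 := by
      have := hconn.dist_triangle (u := y) (v := v) (w := u)
      rw [dcomm y v, dcomm v u] at this; omega
    have hne0 : G.dist y u ≠ 0 := fun h0 => by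
      rw [eq_of_dist_zero hconn h0] at hyw; omega
    have hne1 : G.dist y u ≠ 1 := fun h1 =>
      hcon y (adj_of_dist_one (by rw [dcomm]; exact h1)) hvy hyw
    omega
  -- d(x,y) = 2
  have hxy : G.dist x y = 2 := by
    have hle : G.dist x y ≤ 3 := by
      have h1 := hconn.dist_triangle (u := x) (v := u) (w := y)
      have h2 := hconn.dist_triangle (u := u) (v := v) (w := y)
      rw [dcomm x u] at h1
      omega
    have hne0 : G.dist x y ≠ 0 := fun h0 => by
      rw [eq_of_dist_zero hconn h0, dcomm] at hxv; omega
    have hne1 : G.dist x y ≠ 1 := fun h1 => by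
      -- u ∈ I(x,v) ⊆ B(y,1)
      have hx1 : x ∈ {a : V | G.dist a y ≤ 1} := le_of_eq h1
      have hv1 : v ∈ {a : V | G.dist a y ≤ 1} := le_of_eq hdvy
      have hu1 : u ∈ interval G x v := by
        show G.dist x u + G.dist u v = G.dist x v
        rw [dcomm x u]; omega
      have := ball_convex hconn hbr y 1 x hx1 v hv1 hu1
      have huy : G.dist u y ≤ 1 := this
      rw [dcomm u y] at huy; omega
    have hne3 : G.dist x y ≠ 3 := fun h3 => by
      have hxk : x ∈ {a : V | G.dist a w ≤ k} := le_of_eq hxw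
      have hyk : y ∈ {a : V | G.dist a w ≤ k} := le_of_eq hyw
      have hui : u ∈ interval G x y := by
        show G.dist x u + G.dist u y = G.dist x y
        rw [dcomm x u]
        have h2 := hconn.dist_triangle (u := u) (v := v) (w := y)
        have h2' := hconn.dist_triangle (u := x) (v := u) (w := y)
        rw [dcomm x u] at h2'
        omega
      have := ball_convex hconn hbr w k x hxk y hyk hui
      have : G.dist u w ≤ k := this
      omega
    omega
  -- common neighbour m of x and y
  obtain ⟨m, hxm, hmy⟩ := exists_adj_dist hconn (show G.dist x y = 1 + 1 from hxy)
  have hdxm : G.dist x m = 1 := dist_adj hxm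
  have hmint : m ∈ interval G x y := by
    show G.dist x m + G.dist m y = G.dist x y
    omega
  have hmw : G.dist m w ≤ k :=
    ball_convex hconn hbr w k x (le_of_eq hxw) y (le_of_eq hyw) hmint
  -- m is in N[{u,v}]
  have hpair := hbr {u, v} (pair_convex hconn huv)
  have hxN : x ∈ {a : V | ∃ h ∈ ({u, v} : Set V), G.dist a h ≤ 1} :=
    ⟨u, Or.inl rfl, by rw [dcomm]; omega⟩
  have hyN : y ∈ {a : V | ∃ h ∈ ({u, v} : Set V), G.dist a h ≤ 1} :=
    ⟨v, Or.inr rfl, by rw [dcomm]; omega⟩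
  obtain ⟨h, hh, hmh⟩ := hpair x hxN y hyN hmint
  rcases hh with rfl | rfl
  · -- h = u : d(m,u) ≤ 1
    have hmu : G.dist m h = 1 := by
      have : m ≠ h := fun he => by rw [he] at hmw; omega
      have : G.dist m h ≠ 0 := fun h0 => this (eq_of_dist_zero hconn h0)
      omega
    have hadjum : G.Adj h m := (adj_of_dist_one hmu).symm
    have hmwk : G.dist m w = k := by
      have := hconn.dist_triangle (u := h) (v := m) (w := w)
      rw [dcomm h m] at this; omega
    have hvm : G.dist m v = 2 := by
      have hle : G.dist m v ≤ 2 := by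
        have := hconn.dist_triangle (u := m) (v := h) (w := v)
        omega
      have hne0 : G.dist m v ≠ 0 := fun h0 => by
        rw [eq_of_dist_zero hconn h0] at hmwk; omega
      have hne1 : G.dist m v ≠ 1 := fun h1 =>
        hcon m hadjum (adj_of_dist_one (by rw [dcomm]; exact h1)) hmwk
      omega
    -- u ∈ I(m,v) ⊆ B(y,1)
    have hm1 : m ∈ {a : V | G.dist a y ≤ 1} := by
      show G.dist m y ≤ 1; omega
    have hv1 : v ∈ {a : V | G.dist a y ≤ 1} := le_of_eq hdvy
    have huI : h ∈ interval G m v := by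
      show G.dist m h + G.dist h v = G.dist m v
      omega
    have := ball_convex hconn hbr y 1 m hm1 v hv1 huI
    have huy : G.dist h y ≤ 1 := this
    rw [dcomm h y] at huy; omega
  · -- h = v : d(m,v) ≤ 1
    have hmv : G.dist m h = 1 := by
      have : m ≠ h := fun he => by rw [he] at hmw; omega
      have : G.dist m h ≠ 0 := fun h0 => this (eq_of_dist_zero hconn h0)
      omega
    have hadjvm : G.Adj h m := (adj_of_dist_one hmv).symm
    have hmwk : G.dist m w = k := by
      have := hconn.dist_triangle (u := h) (v := m) (w := w)
      rw [dcomm h m] at this; omega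
    have hum : G.dist m u = 2 := by
      have hle : G.dist m u ≤ 2 := by
        have := hconn.dist_triangle (u := m) (v := h) (w := u)
        rw [dcomm h u] at this; omega
      have hne0 : G.dist m u ≠ 0 := fun h0 => by
        rw [eq_of_dist_zero hconn h0] at hmwk; omega
      have hne1 : G.dist m u ≠ 1 := fun h1 =>
        hcon m (adj_of_dist_one (by rw [dcomm]; exact h1)) hadjvm hmwk
      omega
    -- v ∈ I(m,u) ⊆ B(x,1)
    have hm1 : m ∈ {a : V | G.dist a x ≤ 1} := by
      show G.dist m x ≤ 1; rw [dcomm]; omega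
    have hu1 : u ∈ {a : V | G.dist a x ≤ 1} := by
      show G.dist u x ≤ 1; omega
    have hvI : h ∈ interval G m u := by
      show G.dist m h + G.dist h u = G.dist m u
      rw [dcomm h u]; omega
    have := ball_convex hconn hbr x 1 m hm1 u hu1 hvI
    have hvx : G.dist h x ≤ 1 := this
    rw [dcomm h x] at hvx; omega

lemma oneStep_cons_left {α : Type*} {l1 l2 : List α} (a : α) (h : OneStep l1 l2) :
    OneStep (a :: l1) (a :: l2) := by
  obtain ⟨hl, i, hi, hj⟩ := h
  refine ⟨by simp [hl], i + 1, by simpa using hi, fun j hj' => ?_⟩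
  cases j with
  | zero => simp
  | succ j => simpa using hj j (by omega)

lemma oneStep_cons_cons {α : Type*} {p1 q1 : α} (h : p1 ≠ q1) (s : α) (rest : List α) :
    OneStep (s :: p1 :: rest) (s :: q1 :: rest) := by
  refine ⟨by simp, 1, by simpa using h, fun j hj => ?_⟩
  match j with
  | 0 => simp
  | (j + 2) => simp

lemma shortestStep_cons {s p1 t : V} (h : G.Adj s p1) (hd : G.dist s t = G.dist p1 t + 1)
    {a b : G.Walk p1 t} (hst : ShortestStep G p1 t a b) :
    ShortestStep G s t (Walk.cons h a) (Walk.cons h b) := by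
  obtain ⟨ha, hb, hone⟩ := hst
  refine ⟨?_, ?_, ?_⟩
  · rw [Walk.length_cons, ha, hd]
  · rw [Walk.length_cons, hb, hd]
  · rw [Walk.support_cons, Walk.support_cons]
    exact oneStep_cons_left s hone

lemma reconfigurable_cons {s p1 t : V} (h : G.Adj s p1) (hd : G.dist s t = G.dist p1 t + 1)
    {a b : G.Walk p1 t} (hr : Reconfigurable G p1 t a b) :
    Reconfigurable G s t (Walk.cons h a) (Walk.cons h b) :=
  Relation.ReflTransGen.lift (Walk.cons h) (fun _ _ hxy => shortestStep_cons h hd hxy) _ _ hr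

lemma main_aux (hconn : G.Connected) (hbr : Bridged G) :
    ∀ n : ℕ, ∀ s t : V, G.dist s t = n →
      ∀ P Q : G.Walk s t, P.length = G.dist s t → Q.length = G.dist s t →
        Reconfigurable G s t P Q := by
  intro n
  induction n with
  | zero =>
    intro s t hd P Q hP hQ
    have hst : s = t := eq_of_dist_zero hconn hd
    subst hst
    have hP0 : P = Walk.nil := Walk.nil_iff_eq_nil.mp (Walk.length_eq_zero_iff.mp (by omega))
    have hQ0 : Q = Walk.nil := Walk.nil_iff_eq_nil.mp (Walk.length_eq_zero_iff.mp (by omega))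
    rw [hP0, hQ0]
    exact Relation.ReflTransGen.refl
  | succ n ih =>
    intro s t hd P Q hP hQ
    cases P with
    | nil => rw [SimpleGraph.dist_self] at hd; omega
    | @cons _ p1 _ hsp P' =>
      cases Q with
      | nil => rw [SimpleGraph.dist_self] at hd; omega
      | @cons _ q1 _ hsq Q' =>
        rw [Walk.length_cons] at hP hQ
        have hP'len : P'.length = n := by omega
        have hQ'len : Q'.length = n := by omega
        have hdsp : G.dist s p1 = 1 := dist_adj hsp
        have hdsq : G.dist s q1 = 1 := dist_adj hsq
        have hdp : G.dist p1 t = n := by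
          have h1 : G.dist p1 t ≤ n := hP'len ▸ SimpleGraph.dist_le P'
          have h2 := hconn.dist_triangle (u := s) (v := p1) (w := t)
          omega
        have hdq : G.dist q1 t = n := by
          have h1 : G.dist q1 t ≤ n := hQ'len ▸ SimpleGraph.dist_le Q'
          have h2 := hconn.dist_triangle (u := s) (v := q1) (w := t)
          omega
        by_cases hpq : p1 = q1
        · subst hpq
          exact reconfigurable_cons hsp (by omega)
            (ih p1 t hdp P' Q' (by omega) (by omega))
        · have hadj : G.Adj p1 q1 := by
            have h2 : G.dist p1 q1 ≤ 2 := by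
              have := hconn.dist_triangle (u := p1) (v := s) (w := q1)
              rw [dcomm p1 s] at this; omega
            have hne0 : G.dist p1 q1 ≠ 0 := fun h0 => hpq (eq_of_dist_zero hconn h0)
            have hne2 : G.dist p1 q1 ≠ 2 := fun h2' => by
              have hsI : s ∈ interval G p1 q1 := by
                show G.dist p1 s + G.dist s q1 = G.dist p1 q1
                rw [dcomm p1 s]; omega
              have := ball_convex hconn hbr t n p1 (le_of_eq hdp) q1 (le_of_eq hdq) hsI
              have : G.dist s t ≤ n := this
              omega
            exact adj_of_dist_one (by omega)
          cases n with
          | zero =>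
            exact absurd ((eq_of_dist_zero hconn hdp).trans
              (eq_of_dist_zero hconn hdq).symm) hpq
          | succ m =>
            obtain ⟨z, hpz, hqz, hzt⟩ := triangle_condition hconn hbr hadj hdp hdq
            obtain ⟨Z, hZ⟩ := hconn.exists_walk_length_eq_dist z t
            rw [hzt] at hZ
            have step1 : Reconfigurable G s t (Walk.cons hsp P')
                (Walk.cons hsp (Walk.cons hpz Z)) :=
              reconfigurable_cons hsp (by omega)
                (ih p1 t hdp P' (Walk.cons hpz Z) (by omega)
                  (by rw [Walk.length_cons]; omega))
            have step3 : Reconfigurable G s t (Walk.cons hsq (Walk.cons hqz Z))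
                (Walk.cons hsq Q') :=
              reconfigurable_cons hsq (by omega)
                (ih q1 t hdq (Walk.cons hqz Z) Q' (by rw [Walk.length_cons]; omega)
                  (by omega))
            have step2 : ShortestStep G s t (Walk.cons hsp (Walk.cons hpz Z))
                (Walk.cons hsq (Walk.cons hqz Z)) := by
              refine ⟨?_, ?_, ?_⟩
              · rw [Walk.length_cons, Walk.length_cons]; omega
              · rw [Walk.length_cons, Walk.length_cons]; omega
              · simp only [Walk.support_cons]
                exact oneStep_cons_cons hpq s Z.support
            exact step1.trans ((Relation.ReflTransGen.single step2).trans step3)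

end BridgedAux

/-- In a connected bridged graph, any two `s`–`t` shortest paths are reconfigurable. -/
theorem bridged_reconfigurable {V : Type*} [Fintype V] (G : SimpleGraph V)
    (hconn : G.Connected) (hbr : Bridged G) (s t : V)
    (P Q : G.Walk s t) (hP : P.length = G.dist s t) (hQ : Q.length = G.dist s t) :
    Reconfigurable G s t P Q :=
  BridgedAux.main_aux hconn hbr (G.dist s t) s t rfl P Q hP hQ
end

section
/- Let s and t be vertices of the d-dimensional Boolean hypercube Q_d at graph distance r, and let P_1 and P_2 be two s–t shortest paths with flip sequences π_1 and π_2. Then P_1 and P_2 are reconfigurable, and the minimum number of reconfiguration steps needed to transform P_1 into P_2 equals the Kendall tau distance between π_1 and π_2, i.e., the number of pairs {a, b} of coordinates whose relative order in π_1 differs from their relative order in π_2. -/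
/-- The `d`-dimensional Boolean hypercube: vertices are `Fin d → Bool`, adjacent iff
they differ in exactly one coordinate. -/
def cube (d : ℕ) : SimpleGraph (Fin d → Bool) where
  Adj x y := (Finset.univ.filter fun i => x i ≠ y i).card = 1
  symm := by
    constructor
    intro x y h
    have hset : (Finset.univ.filter fun i => y i ≠ x i)
        = (Finset.univ.filter fun i => x i ≠ y i) :=
      Finset.filter_congr (fun i _ => by exact ne_comm)
    rw [hset]; exact h
  loopless := by constructor; intro x h; simp at h

/-- The flip sequence of a walk in the hypercube: the list whose `i`-th entry is the
coordinate flipped at the `i`-th step. -/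
def flipSeq {d : ℕ} : {x y : Fin d → Bool} → (cube d).Walk x y → List (Fin d)
  | _, _, SimpleGraph.Walk.nil => []
  | x, _, @SimpleGraph.Walk.cons _ _ _ z _ h p =>
      (Finset.univ.filter fun i => x i ≠ z i).min'
        (Finset.card_pos.mp (by have hc : (Finset.univ.filter fun i => x i ≠ z i).card = 1 := h; omega))
        :: flipSeq p

/-- The minimum number of reconfiguration steps needed to transform one `s`–`t`
shortest path into another (through `s`–`t` shortest paths). -/
noncomputable def reconfDist {V : Type*} (G : SimpleGraph V) (s t : V)
    (P Q : G.Walk s t) : ℕ :=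
  sInf {n : ℕ | ∃ f : ℕ → G.Walk s t, f 0 = P ∧ f n = Q ∧
    (∀ i ≤ n, (f i).length = G.dist s t) ∧
    ∀ i < n, OneStep (f i).support (f (i + 1)).support}

/-- The Kendall tau distance between two lists of coordinates: the number of pairs
`{a, b}` whose relative order in the first list differs from that in the second. -/
def kendallTau {d : ℕ} (l₁ l₂ : List (Fin d)) : ℕ :=
  ((Finset.univ : Finset (Fin d × Fin d)).filter fun p =>
    p.1 < p.2 ∧
      ¬((l₁.idxOf p.1 < l₁.idxOf p.2) ↔ (l₂.idxOf p.1 < l₂.idxOf p.2))).card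

open Finset List SimpleGraph

variable {d : ℕ}

/-- Flip one coordinate. -/
def flipv (x : Fin d → Bool) (i : Fin d) : Fin d → Bool := Function.update x i (!x i)

@[simp] lemma flipv_same (x : Fin d → Bool) (i : Fin d) : flipv x i i = !x i := by
  simp [flipv]

lemma flipv_ne (x : Fin d → Bool) {i j : Fin d} (h : j ≠ i) : flipv x i j = x j := by
  simp [flipv, Function.update_of_ne h]

lemma flipv_comm (x : Fin d → Bool) (a b : Fin d) :
    flipv (flipv x a) b = flipv (flipv x b) a := by
  funext j
  simp only [flipv, Function.update_apply]
  split_ifs <;> subst_vars <;> first | rfl | simp_all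

lemma bool_ne_iff {a b : Bool} : a ≠ b ↔ b = !a := by cases a <;> cases b <;> simp

lemma filter_flipv (x : Fin d → Bool) (i : Fin d) :
    (Finset.univ.filter fun j => x j ≠ flipv x i j) = {i} := by
  ext j
  simp only [Finset.mem_filter, Finset.mem_univ, true_and, Finset.mem_singleton]
  constructor
  · intro h
    by_contra hji
    exact h (flipv_ne x hji).symm
  · rintro rfl
    simp

lemma cube_adj_flipv (x : Fin d → Bool) (i : Fin d) : (cube d).Adj x (flipv x i) := by
  show (Finset.univ.filter fun j => x j ≠ flipv x i j).card = 1
  rw [filter_flipv]; rfl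

/-- The coordinate flipped along an edge. -/
def coordOf {x z : Fin d → Bool} (h : (cube d).Adj x z) : Fin d :=
  (Finset.univ.filter fun i => x i ≠ z i).min'
    (Finset.card_pos.mp (by have hc : (Finset.univ.filter fun i => x i ≠ z i).card = 1 := h; omega))

lemma flipSeq_cons {x z y : Fin d → Bool} (h : (cube d).Adj x z) (p : (cube d).Walk z y) :
    flipSeq (SimpleGraph.Walk.cons h p) = coordOf h :: flipSeq p := rfl

lemma adj_eq_flipv {x z : Fin d → Bool} (h : (cube d).Adj x z) : z = flipv x (coordOf h) := by
  obtain ⟨i, hi⟩ := Finset.card_eq_one.mp (h : (Finset.univ.filter fun i => x i ≠ z i).card = 1)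
  have hco : coordOf h = i := by simp [coordOf, hi]
  rw [hco]
  funext j
  rcases eq_or_ne j i with rfl | hji
  · have hj : j ∈ Finset.univ.filter fun i => x i ≠ z i := by
      rw [hi]; exact Finset.mem_singleton_self j
    have : x j ≠ z j := (Finset.mem_filter.mp hj).2
    rw [flipv_same]
    exact (bool_ne_iff.mp this)
  · have : ¬ (x j ≠ z j) := by
      intro hne
      have : j ∈ ({i} : Finset (Fin d)) := hi ▸ (Finset.mem_filter.mpr ⟨Finset.mem_univ j, hne⟩)
      exact hji (Finset.mem_singleton.mp this)
    rw [flipv_ne _ hji]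
    by_contra hne
    exact this (fun he => hne he.symm)

lemma coordOf_flipv (x : Fin d → Bool) (i : Fin d) : coordOf (cube_adj_flipv x i) = i := by
  simp [coordOf, filter_flipv]

/-- Walk obtained by flipping the coordinates in `l` in order. -/
def mkWalk (s : Fin d → Bool) : (l : List (Fin d)) → (cube d).Walk s (l.foldl flipv s)
  | [] => SimpleGraph.Walk.nil
  | a :: l => SimpleGraph.Walk.cons (cube_adj_flipv s a) (mkWalk (flipv s a) l)

@[simp] lemma length_mkWalk (s : Fin d → Bool) (l : List (Fin d)) :
    (mkWalk s l).length = l.length := by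
  induction l generalizing s with
  | nil => rfl
  | cons a l ih => simp [mkWalk, ih]

@[simp] lemma flipSeq_mkWalk (s : Fin d → Bool) (l : List (Fin d)) :
    flipSeq (mkWalk s l) = l := by
  induction l generalizing s with
  | nil => rfl
  | cons a l ih => exact congrArg₂ List.cons (coordOf_flipv s a) (ih (flipv s a))

@[simp] lemma support_mkWalk (s : Fin d → Bool) (l : List (Fin d)) :
    (mkWalk s l).support = List.scanl flipv s l := by
  induction l generalizing s with
  | nil => rfl
  | cons a l ih => rw [List.scanl_cons]; exact congrArg (List.cons s) (ih (flipv s a))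

lemma support_eq_scanl : ∀ {x y : Fin d → Bool} (p : (cube d).Walk x y),
    p.support = List.scanl flipv x (flipSeq p)
  | x, _, SimpleGraph.Walk.nil => rfl
  | x, y, SimpleGraph.Walk.cons hadj p => by
    rw [SimpleGraph.Walk.support_cons, flipSeq_cons, List.scanl_cons,
      support_eq_scanl p, ← adj_eq_flipv hadj]

lemma walk_eq_of_support_eq {V : Type*} {G : SimpleGraph V} :
    ∀ {x y : V} (p q : G.Walk x y), p.support = q.support → p = q
  | x, _, SimpleGraph.Walk.nil, SimpleGraph.Walk.nil, _ => rfl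
  | x, _, SimpleGraph.Walk.nil, SimpleGraph.Walk.cons h q, hs => by
    exfalso
    have := congrArg List.length hs
    simp [SimpleGraph.Walk.support_cons] at this
  | x, _, SimpleGraph.Walk.cons h p, SimpleGraph.Walk.nil, hs => by
    exfalso
    have := congrArg List.length hs
    simp [SimpleGraph.Walk.support_cons] at this
  | x, y, SimpleGraph.Walk.cons h p, SimpleGraph.Walk.cons h' q, hs => by
    rename_i z z'
    rw [SimpleGraph.Walk.support_cons, SimpleGraph.Walk.support_cons] at hs
    have hs' : p.support = q.support := List.cons_injective hs
    have hz : z = z' := by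
      have h3 := hs'
      rw [SimpleGraph.Walk.support_eq_cons p, SimpleGraph.Walk.support_eq_cons q] at h3
      exact List.head_eq_of_cons_eq h3
    subst hz
    rw [walk_eq_of_support_eq p q hs']

/-- Hamming distance. -/
def hamm (x y : Fin d → Bool) : ℕ := (Finset.univ.filter fun i => x i ≠ y i).card

lemma hamm_triangle (x z y : Fin d → Bool) : hamm x y ≤ hamm x z + hamm z y := by
  classical
  have hsub : (Finset.univ.filter fun i => x i ≠ y i) ⊆
      (Finset.univ.filter fun i => x i ≠ z i) ∪ (Finset.univ.filter fun i => z i ≠ y i) := by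
    intro j hj
    simp only [Finset.mem_filter, Finset.mem_univ, true_and] at hj
    simp only [Finset.mem_union, Finset.mem_filter, Finset.mem_univ, true_and]
    by_contra hc
    push_neg at hc
    exact hj (hc.1.trans hc.2)
  calc hamm x y ≤ _ := Finset.card_le_card hsub
    _ ≤ _ := Finset.card_union_le _ _

lemma hamm_le_length : ∀ {x y : Fin d → Bool} (p : (cube d).Walk x y), hamm x y ≤ p.length
  | x, _, SimpleGraph.Walk.nil => by simp [hamm]
  | x, y, @SimpleGraph.Walk.cons _ _ _ z _ hadj p => by
    have h1 : hamm x z = 1 := hadj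
    have := hamm_le_length p
    have := hamm_triangle x z y
    rw [SimpleGraph.Walk.length_cons]
    omega

@[simp] lemma length_flipSeq : ∀ {x y : Fin d → Bool} (p : (cube d).Walk x y),
    (flipSeq p).length = p.length
  | _, _, SimpleGraph.Walk.nil => rfl
  | _, _, SimpleGraph.Walk.cons hadj p => by
    rw [flipSeq_cons, List.length_cons, SimpleGraph.Walk.length_cons, length_flipSeq p]

lemma foldl_flipv_of_nodup : ∀ (l : List (Fin d)), l.Nodup → ∀ (s : Fin d → Bool) (j : Fin d),
    l.foldl flipv s j = if j ∈ l then !s j else s j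
  | [], _, s, j => by simp
  | a :: l, hnd, s, j => by
    have hal : a ∉ l := (List.nodup_cons.mp hnd).1
    rw [List.foldl_cons, foldl_flipv_of_nodup l (List.nodup_cons.mp hnd).2]
    rcases eq_or_ne j a with rfl | hja
    · simp [hal]
    · rw [flipv_ne _ hja]
      simp [List.mem_cons, hja]

lemma foldl_flipv_eq {s t : Fin d → Bool} {l : List (Fin d)} (hnd : l.Nodup)
    (hfs : l.toFinset = Finset.univ.filter fun i => s i ≠ t i) :
    l.foldl flipv s = t := by
  funext j
  rw [foldl_flipv_of_nodup l hnd]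
  have hmem : j ∈ l ↔ s j ≠ t j := by
    rw [← List.mem_toFinset, hfs]; simp
  split_ifs with h
  · exact (bool_ne_iff.mp (hmem.mp h)).symm
  · by_contra hc
    exact (hmem.not.mp h) (fun he => hc he) |>.elim

lemma cube_dist (s t : Fin d → Bool) : (cube d).dist s t = hamm s t := by
  classical
  set l := (Finset.univ.filter fun i => s i ≠ t i).toList with hl
  have hnd : l.Nodup := Finset.nodup_toList _
  have hfs : l.toFinset = Finset.univ.filter fun i => s i ≠ t i := by
    simp [hl, Finset.toList_toFinset]
  have hend : l.foldl flipv s = t := foldl_flipv_eq hnd hfs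
  have hlen : l.length = hamm s t := by simp [hl, hamm, Finset.length_toList]
  let p : (cube d).Walk s t := (mkWalk s l).copy rfl hend
  have hple : (cube d).dist s t ≤ hamm s t := by
    have := SimpleGraph.dist_le p
    simpa [p, SimpleGraph.Walk.length_copy, hlen] using this
  have hreach : (cube d).Reachable s t := ⟨p⟩
  obtain ⟨q, hq⟩ := hreach.exists_walk_length_eq_dist
  have := hamm_le_length q
  omega

lemma shortest_flipSeq : ∀ {x y : Fin d → Bool} (p : (cube d).Walk x y),
    p.length = hamm x y →
    (flipSeq p).Nodup ∧ (flipSeq p).toFinset = (Finset.univ.filter fun i => x i ≠ y i)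
  | x, _, SimpleGraph.Walk.nil, h => by
    constructor
    · exact List.nodup_nil
    · ext j; simp [flipSeq]
  | x, y, @SimpleGraph.Walk.cons _ _ _ z _ hadj p, h => by
    classical
    set a := coordOf hadj with ha
    have hz : z = flipv x a := adj_eq_flipv hadj
    have hxz : hamm x z = 1 := hadj
    have hle : hamm z y ≤ p.length := hamm_le_length p
    have htri : hamm x y ≤ hamm x z + hamm z y := hamm_triangle x z y
    have hlen : p.length + 1 = hamm x y := by
      rw [← h, SimpleGraph.Walk.length_cons]
    have hxa : x a ≠ z a := by rw [hz, flipv_same]; cases x a <;> simp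
    have hxj : ∀ j, j ≠ a → x j = z j := fun j hj => by rw [hz, flipv_ne _ hj]
    have hza : z a = y a := by
      by_contra hzy
      have hya : y a = x a := by
        have h1 := bool_ne_iff.mp hxa
        have h2 := bool_ne_iff.mp hzy
        rw [h2, h1]; cases x a <;> rfl
      have hset : (Finset.univ.filter fun i => x i ≠ y i)
          = (Finset.univ.filter fun i => z i ≠ y i).erase a := by
        ext j
        simp only [Finset.mem_filter, Finset.mem_univ, true_and, Finset.mem_erase]
        rcases eq_or_ne j a with rfl | hj
        · simp [hya, hzy]
        · simp [hj, hxj j hj]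
      have hmem : a ∈ (Finset.univ.filter fun i => z i ≠ y i) := by
        simp only [Finset.mem_filter, Finset.mem_univ, true_and]; exact hzy
      have : hamm x y = hamm z y - 1 := by
        rw [hamm, hamm, hset, Finset.card_erase_of_mem hmem]
      omega
    have hpl : p.length = hamm z y := by
      -- hamm x y ≤ 1 + hamm z y and hamm z y ≤ p.length, hamm x y = p.length + 1
      omega
    obtain ⟨ihnd, ihfs⟩ := shortest_flipSeq p hpl
    have hanotin : a ∉ flipSeq p := by
      rw [← List.mem_toFinset, ihfs]
      simp [hza]
    have hxya : x a ≠ y a := by rw [← hza] at *; exact hxa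
    constructor
    · rw [flipSeq_cons, List.nodup_cons]
      exact ⟨hanotin, ihnd⟩
    · rw [flipSeq_cons, List.toFinset_cons, ihfs]
      ext j
      simp only [Finset.mem_insert, Finset.mem_filter, Finset.mem_univ, true_and]
      rcases eq_or_ne j a with rfl | hj
      · simp [hxya, ← ha]
      · simp [hj, hxj j hj, ← ha]

lemma onestep_cons {α : Type*} (x : α) {u v : List α} (h : OneStep u v) :
    OneStep (x :: u) (x :: v) := by
  obtain ⟨hlen, i, hne, hall⟩ := h
  refine ⟨by simp [hlen], i + 1, by simpa using hne, ?_⟩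
  intro j hj
  cases j with
  | zero => simp
  | succ k => simpa using hall k (by omega)

lemma onestep_of_cons {α : Type*} {x : α} {u v : List α} (h : OneStep (x :: u) (x :: v)) :
    OneStep u v := by
  obtain ⟨hlen, i, hne, hall⟩ := h
  have hi : i ≠ 0 := by rintro rfl; simp at hne
  obtain ⟨k, rfl⟩ := Nat.exists_eq_succ_of_ne_zero hi
  refine ⟨by simpa using hlen, k, by simpa using hne, ?_⟩
  intro j hj
  have := hall (j + 1) (by omega)
  simpa using this

lemma onestep_middle {α : Type*} (u : List α) {x y : α} (v : List α) (h : x ≠ y) :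
    OneStep (u ++ x :: v) (u ++ y :: v) := by
  induction u with
  | nil =>
    refine ⟨by simp, 0, by simpa using h, ?_⟩
    intro j hj
    obtain ⟨k, rfl⟩ := Nat.exists_eq_succ_of_ne_zero hj
    simp
  | cons c u ih => exact onestep_cons c ih

lemma flipv_ne_flipv {s : Fin d → Bool} {a b : Fin d} (hab : a ≠ b) : flipv s a ≠ flipv s b := by
  intro h
  have := congrFun h a
  rw [flipv_same, flipv_ne s hab] at this
  cases s a <;> simp at this

lemma onestep_scanl (s : Fin d → Bool) (L : List (Fin d)) {a b : Fin d} (R : List (Fin d))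
    (hab : a ≠ b) :
    OneStep (List.scanl flipv s (L ++ a :: b :: R)) (List.scanl flipv s (L ++ b :: a :: R)) := by
  induction L generalizing s with
  | nil =>
    simp only [List.nil_append, List.scanl_cons, List.singleton_append]
    rw [flipv_comm s b a]
    exact onestep_cons s (onestep_middle [] _ (flipv_ne_flipv hab))
  | cons c L ih =>
    simp only [List.cons_append, List.scanl_cons, List.singleton_append]
    exact onestep_cons s (ih (flipv s c))

/-- Two lists differ by a swap of two adjacent (distinct) entries. -/
def AdjSwap {α : Type*} (l₁ l₂ : List α) : Prop :=
  ∃ L a b R, a ≠ b ∧ l₁ = L ++ a :: b :: R ∧ l₂ = L ++ b :: a :: R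

lemma adjswap_of_onestep {x y : Fin d → Bool} (p : (cube d).Walk x y) :
    ∀ (q : (cube d).Walk x y), (flipSeq p).Nodup → (flipSeq q).Nodup →
    OneStep p.support q.support → AdjSwap (flipSeq p) (flipSeq q) := by
  induction p with
  | nil =>
    intro q _ _ hstep
    cases q with
    | nil => obtain ⟨_, i, hne, _⟩ := hstep; exact (hne rfl).elim
    | cons h' q' =>
      obtain ⟨hlen, _⟩ := hstep
      rw [SimpleGraph.Walk.support_nil, SimpleGraph.Walk.support_cons] at hlen
      have := SimpleGraph.Walk.support_ne_nil q'
      simp at hlen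
  | cons hadj p' ih =>
    rename_i x₀ z₁ y₀
    intro q hnp hnq hstep
    cases q with
    | nil =>
      obtain ⟨hlen, _⟩ := hstep
      rw [SimpleGraph.Walk.support_nil, SimpleGraph.Walk.support_cons] at hlen
      have := SimpleGraph.Walk.support_ne_nil p'
      simp at hlen
    | cons hadj' q' =>
      rename_i z₂
      rw [SimpleGraph.Walk.support_cons, SimpleGraph.Walk.support_cons] at hstep
      have h1 : OneStep p'.support q'.support := onestep_of_cons hstep
      rw [flipSeq_cons] at hnp
      rw [flipSeq_cons] at hnq
      by_cases hzz : z₁ = z₂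
      · subst hzz
        have hco : coordOf hadj = coordOf hadj' := rfl
        obtain ⟨L, a, b, R, hab, e1, e2⟩ :=
          ih q' (List.nodup_cons.mp hnp).2 (List.nodup_cons.mp hnq).2 h1
        exact ⟨coordOf hadj :: L, a, b, R, hab,
          by rw [flipSeq_cons, e1]; rfl,
          by rw [flipSeq_cons, e2, ← hco]; rfl⟩
      · -- heads of p'.support, q'.support differ; the differing index is 0
        obtain ⟨hlen, i, hne, hall⟩ := h1
        have hp0 : p'.support[0]? = some z₁ := by
          rw [SimpleGraph.Walk.support_eq_cons p']; simp
        have hq0 : q'.support[0]? = some z₂ := by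
          rw [SimpleGraph.Walk.support_eq_cons q']; simp
        have hi0 : i = 0 := by
          by_contra hi
          have := hall 0 (fun h => hi h.symm)
          rw [hp0, hq0] at this
          exact hzz (Option.some_injective _ this)
        subst hi0
        cases p' with
        | nil =>
          cases q' with
          | nil => exact absurd rfl hzz
          | cons h₂ q'' =>
            rw [SimpleGraph.Walk.support_nil, SimpleGraph.Walk.support_cons] at hlen
            have := SimpleGraph.Walk.support_ne_nil q''
            simp at hlen
        | cons h₂ p'' =>
          rename_i w₁
          cases q' with
          | nil =>
            rw [SimpleGraph.Walk.support_nil, SimpleGraph.Walk.support_cons] at hlen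
            have := SimpleGraph.Walk.support_ne_nil p''
            simp at hlen
          | cons h₂' q'' =>
            rename_i w₂
            have h1eq : (z₁ :: p''.support)[1]? = (z₂ :: q''.support)[1]? := by
              have := hall 1 (by omega)
              rwa [SimpleGraph.Walk.support_cons, SimpleGraph.Walk.support_cons] at this
            have hw : w₁ = w₂ := by
              rw [List.getElem?_cons_succ, List.getElem?_cons_succ,
                SimpleGraph.Walk.support_eq_cons p'', SimpleGraph.Walk.support_eq_cons q''] at h1eq
              exact Option.some_injective _ (by simpa using h1eq)
            subst hw
            have hsupp : p''.support = q''.support := by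
              apply List.ext_getElem?
              intro n
              have := hall (n + 1) (by omega)
              rwa [SimpleGraph.Walk.support_cons, SimpleGraph.Walk.support_cons,
                List.getElem?_cons_succ, List.getElem?_cons_succ] at this
            have hpq : p'' = q'' := walk_eq_of_support_eq p'' q'' hsupp
            subst hpq
            -- coordinates
            set a := coordOf hadj with hadef
            set b := coordOf h₂ with hbdef
            set a' := coordOf hadj' with hadef'
            set b' := coordOf h₂' with hbdef'
            have hz1 : z₁ = flipv x₀ a := adj_eq_flipv hadj
            have hz2 : z₂ = flipv x₀ a' := adj_eq_flipv hadj'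
            have hw1 : w₁ = flipv z₁ b := adj_eq_flipv h₂
            have hw2 : w₁ = flipv z₂ b' := adj_eq_flipv h₂'
            have hab : a ≠ b := by
              have hmem := (List.nodup_cons.mp hnp).1
              rw [flipSeq_cons, ← hbdef, List.mem_cons] at hmem
              push_neg at hmem
              exact hmem.1
            have hab' : a' ≠ b' := by
              have hmem := (List.nodup_cons.mp hnq).1
              rw [flipSeq_cons, ← hbdef', List.mem_cons] at hmem
              push_neg at hmem
              exact hmem.1
            have haa' : a ≠ a' := fun h => hzz (by rw [hz1, hz2, h])
            have hE : flipv (flipv x₀ a) b = flipv (flipv x₀ a') b' := by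
              rw [← hz1, ← hz2, ← hw1, ← hw2]
            have hab2 : a = b' := by
              by_contra hc
              have hEa := congrFun hE a
              rw [flipv_ne (flipv x₀ a) hab, flipv_same, flipv_ne (flipv x₀ a') hc,
                flipv_ne x₀ haa'] at hEa
              cases x₀ a <;> simp at hEa
            have hba' : b = a' := by
              by_contra hc
              have hEb := congrFun hE b
              rw [flipv_same, flipv_ne x₀ (Ne.symm hab),
                flipv_ne (flipv x₀ a') (fun h => (Ne.symm hab) (h.trans hab2.symm)),
                flipv_ne x₀ hc] at hEb
              cases x₀ b <;> simp at hEb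
            refine ⟨[], a, b, flipSeq p'', hab, ?_, ?_⟩
            · rw [flipSeq_cons, flipSeq_cons, ← hadef, ← hbdef]
              rfl
            · rw [flipSeq_cons, flipSeq_cons, ← hadef', ← hbdef', ← hab2, ← hba']
              rfl

lemma kt_self (l : List (Fin d)) : kendallTau l l = 0 := by
  simp [kendallTau]

lemma indexOf_swap_ne {L R : List (Fin d)} {a b c : Fin d} (hca : c ≠ a) (hcb : c ≠ b) :
    (L ++ a :: b :: R).idxOf c = (L ++ b :: a :: R).idxOf c := by
  by_cases hc : c ∈ L
  · rw [List.idxOf_append_of_mem hc, List.idxOf_append_of_mem hc]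
  · rw [List.idxOf_append_of_notMem hc, List.idxOf_append_of_notMem hc,
      List.idxOf_cons_ne _ (Ne.symm hca), List.idxOf_cons_ne _ (Ne.symm hcb),
      List.idxOf_cons_ne _ (Ne.symm hcb), List.idxOf_cons_ne _ (Ne.symm hca)]

lemma indexOf_swap_out {L R : List (Fin d)} {a b c : Fin d} (hca : c ≠ a) (hcb : c ≠ b) :
    (L ++ a :: b :: R).idxOf c < L.length ∨
      L.length + 2 ≤ (L ++ a :: b :: R).idxOf c := by
  by_cases hc : c ∈ L
  · left
    rw [List.idxOf_append_of_mem hc]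
    exact List.idxOf_lt_length_iff.mpr hc
  · right
    rw [List.idxOf_append_of_notMem hc, List.idxOf_cons_ne _ (Ne.symm hca),
      List.idxOf_cons_ne _ (Ne.symm hcb)]
    omega

lemma indexOf_swap_ab {L R : List (Fin d)} {a b : Fin d}
    (hnd : (L ++ a :: b :: R).Nodup) (hab : a ≠ b) :
    (L ++ a :: b :: R).idxOf a = L.length ∧
      (L ++ a :: b :: R).idxOf b = L.length + 1 := by
  have hdisj := (List.nodup_append'.mp hnd).2.2
  have haL : a ∉ L := fun h => hdisj h (by simp)
  have hbL : b ∉ L := fun h => hdisj h (by simp)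
  constructor
  · rw [List.idxOf_append_of_notMem haL, List.idxOf_cons_self]
    omega
  · rw [List.idxOf_append_of_notMem hbL, List.idxOf_cons_ne _ hab,
      List.idxOf_cons_self]

lemma nodup_swap {L R : List (Fin d)} {a b : Fin d} (hnd : (L ++ a :: b :: R).Nodup) :
    (L ++ b :: a :: R).Nodup :=
  (List.Perm.append_left L (List.Perm.swap b a R)).nodup hnd

lemma idx_lt_iff_swap {L R : List (Fin d)} {a b : Fin d} (hab : a ≠ b)
    (hnd : (L ++ a :: b :: R).Nodup) {u v : Fin d} (huv : u ≠ v)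
    (h1 : ¬(u = a ∧ v = b)) (h2 : ¬(u = b ∧ v = a)) :
    ((L ++ a :: b :: R).idxOf u < (L ++ a :: b :: R).idxOf v ↔
     (L ++ b :: a :: R).idxOf u < (L ++ b :: a :: R).idxOf v) := by
  have hnd2 : (L ++ b :: a :: R).Nodup := nodup_swap hnd
  obtain ⟨hia, hib⟩ := indexOf_swap_ab hnd hab
  obtain ⟨hib2, hia2⟩ := indexOf_swap_ab hnd2 (Ne.symm hab)
  by_cases hua : u = a
  · have hva : v ≠ a := fun h => huv (hua.trans h.symm)
    have hvb : v ≠ b := fun h => h1 ⟨hua, h⟩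
    have hout := indexOf_swap_out (L := L) (R := R) (a := a) (b := b) hva hvb
    rw [hua, hia, hia2, ← indexOf_swap_ne hva hvb]
    omega
  · by_cases hub : u = b
    · have hva : v ≠ a := fun h => h2 ⟨hub, h⟩
      have hvb : v ≠ b := fun h => huv (hub.trans h.symm)
      have hout := indexOf_swap_out (L := L) (R := R) (a := a) (b := b) hva hvb
      rw [hub, hib, hib2, ← indexOf_swap_ne hva hvb]
      omega
    · by_cases hva : v = a
      · have hout := indexOf_swap_out (L := L) (R := R) (a := a) (b := b) hua hub
        rw [hva, hia, hia2, ← indexOf_swap_ne hua hub]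
        omega
      · by_cases hvb : v = b
        · have hout := indexOf_swap_out (L := L) (R := R) (a := a) (b := b) hua hub
          rw [hvb, hib, hib2, ← indexOf_swap_ne hua hub]
          omega
        · rw [indexOf_swap_ne hua hub, indexOf_swap_ne hva hvb]

lemma kt_swap_cases {L R m : List (Fin d)} {a b : Fin d} (hab : a ≠ b)
    (hnd : (L ++ a :: b :: R).Nodup) :
    (∀ p : Fin d × Fin d, p ≠ (if a < b then (a, b) else (b, a)) →
      (p ∈ (Finset.univ.filter fun p : Fin d × Fin d => p.1 < p.2 ∧
          ¬(((L ++ a :: b :: R).idxOf p.1 < (L ++ a :: b :: R).idxOf p.2) ↔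
            (m.idxOf p.1 < m.idxOf p.2))) ↔
       p ∈ (Finset.univ.filter fun p : Fin d × Fin d => p.1 < p.2 ∧
          ¬(((L ++ b :: a :: R).idxOf p.1 < (L ++ b :: a :: R).idxOf p.2) ↔
            (m.idxOf p.1 < m.idxOf p.2))))) ∧
    ((if a < b then (a, b) else (b, a)) ∈ (Finset.univ.filter fun p : Fin d × Fin d => p.1 < p.2 ∧
          ¬(((L ++ a :: b :: R).idxOf p.1 < (L ++ a :: b :: R).idxOf p.2) ↔
            (m.idxOf p.1 < m.idxOf p.2))) ↔
     (if a < b then (a, b) else (b, a)) ∉ (Finset.univ.filter fun p : Fin d × Fin d => p.1 < p.2 ∧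
          ¬(((L ++ b :: a :: R).idxOf p.1 < (L ++ b :: a :: R).idxOf p.2) ↔
            (m.idxOf p.1 < m.idxOf p.2)))) := by
  obtain ⟨hia, hib⟩ := indexOf_swap_ab hnd hab
  obtain ⟨hib2, hia2⟩ := indexOf_swap_ab (nodup_swap hnd) (Ne.symm hab)
  constructor
  · intro p hpq
    simp only [Finset.mem_filter, Finset.mem_univ, true_and]
    by_cases hlt : p.1 < p.2
    · have huv : p.1 ≠ p.2 := ne_of_lt hlt
      have h1 : ¬(p.1 = a ∧ p.2 = b) := by
        rintro ⟨e1, e2⟩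
        have : a < b := e1 ▸ e2 ▸ hlt
        apply hpq
        rw [if_pos this, ← e1, ← e2]
      have h2 : ¬(p.1 = b ∧ p.2 = a) := by
        rintro ⟨e1, e2⟩
        have hba : b < a := e1 ▸ e2 ▸ hlt
        apply hpq
        rw [if_neg (asymm hba), ← e1, ← e2]
      rw [idx_lt_iff_swap hab hnd huv h1 h2]
    · simp [hlt]
  · rcases lt_or_gt_of_ne hab with hlt | hgt
    · rw [if_pos hlt]
      simp only [Finset.mem_filter, Finset.mem_univ, true_and]
      rw [hia, hib, hia2, hib2]
      constructor
      · rintro ⟨-, hc⟩ ⟨-, hc2⟩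
        by_cases hM : List.idxOf a m < List.idxOf b m
        · exact hc (iff_of_true (by omega) hM)
        · exact hc2 (iff_of_false (by omega) hM)
      · intro hc
        have hM : ¬(List.idxOf a m < List.idxOf b m) := by
          intro hM
          exact hc ⟨hlt, fun hiff2 => absurd (hiff2.mpr hM) (by omega)⟩
        exact ⟨hlt, fun hiff => hM (hiff.mp (by omega))⟩
    · rw [if_neg (asymm hgt)]
      simp only [Finset.mem_filter, Finset.mem_univ, true_and]
      rw [hia, hib, hia2, hib2]
      constructor
      · rintro ⟨-, hc⟩ ⟨-, hc2⟩
        by_cases hM : List.idxOf b m < List.idxOf a m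
        · exact hc2 (iff_of_true (by omega) hM)
        · exact hc (iff_of_false (by omega) hM)
      · intro hc
        have hM : List.idxOf b m < List.idxOf a m := by
          by_contra hM
          exact hc ⟨hgt, fun hiff2 => hM (hiff2.mp (by omega))⟩
        exact ⟨hgt, fun hiff => absurd (hiff.mpr hM) (by omega)⟩

lemma filter_swap_card_mem {α : Type*} [DecidableEq α] {A B : Finset α} {q : α}
    (hall : ∀ p, p ≠ q → (p ∈ A ↔ p ∈ B)) (hq : q ∈ A ↔ q ∉ B) (hmem : q ∈ A) :
    A.card = B.card + 1 := by
  have hB : B = A.erase q := by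
    ext p
    rw [Finset.mem_erase]
    by_cases hpq : p = q
    · subst hpq
      simp [hq.mp hmem]
    · rw [← hall p hpq]
      simp [hpq]
  rw [hB, Finset.card_erase_of_mem hmem]
  have : 0 < A.card := Finset.card_pos.mpr ⟨q, hmem⟩
  omega

lemma filter_swap_card {α : Type*} [DecidableEq α] {A B : Finset α} {q : α}
    (hall : ∀ p, p ≠ q → (p ∈ A ↔ p ∈ B)) (hq : q ∈ A ↔ q ∉ B) :
    A.card = B.card + 1 ∨ B.card = A.card + 1 := by
  by_cases hmem : q ∈ A
  · left
    exact filter_swap_card_mem hall hq hmem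
  · right
    have hmemB : q ∈ B := by
      by_contra h
      exact hmem (hq.mpr h)
    have hq2 : q ∈ B ↔ q ∉ A := ⟨fun _ => hmem, fun _ => hmemB⟩
    exact filter_swap_card_mem (fun p hpq => (hall p hpq).symm) hq2 hmemB

lemma kt_swap_or {L R m : List (Fin d)} {a b : Fin d} (hab : a ≠ b)
    (hnd : (L ++ a :: b :: R).Nodup) :
    kendallTau (L ++ a :: b :: R) m = kendallTau (L ++ b :: a :: R) m + 1 ∨
      kendallTau (L ++ b :: a :: R) m = kendallTau (L ++ a :: b :: R) m + 1 := by
  obtain ⟨hall, hq⟩ := kt_swap_cases (m := m) hab hnd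
  exact filter_swap_card hall hq

lemma kt_swap_dec {L R m : List (Fin d)} {a b : Fin d} (hab : a ≠ b)
    (hnd : (L ++ a :: b :: R).Nodup) (hm : m.idxOf b < m.idxOf a) :
    kendallTau (L ++ a :: b :: R) m = kendallTau (L ++ b :: a :: R) m + 1 := by
  obtain ⟨hall, hq⟩ := kt_swap_cases (m := m) hab hnd
  obtain ⟨hia, hib⟩ := indexOf_swap_ab hnd hab
  have hmem : (if a < b then (a, b) else (b, a)) ∈
      (Finset.univ.filter fun p : Fin d × Fin d => p.1 < p.2 ∧
        ¬(((L ++ a :: b :: R).idxOf p.1 < (L ++ a :: b :: R).idxOf p.2) ↔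
          (m.idxOf p.1 < m.idxOf p.2))) := by
    rcases lt_or_gt_of_ne hab with hlt | hgt
    · rw [if_pos hlt]
      simp only [Finset.mem_filter, Finset.mem_univ, true_and]
      refine ⟨hlt, fun hiff => ?_⟩
      rw [hia, hib] at hiff
      have := hiff.mp (by omega)
      omega
    · rw [if_neg (asymm hgt)]
      simp only [Finset.mem_filter, Finset.mem_univ, true_and]
      refine ⟨hgt, fun hiff => ?_⟩
      rw [hia, hib] at hiff
      have := hiff.mpr hm
      omega
  exact filter_swap_card_mem hall hq hmem

lemma exists_dec_swap {l m : List (Fin d)} (hl : l.Nodup) (hm : m.Nodup)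
    (hfs : l.toFinset = m.toFinset) (hne : l ≠ m) :
    ∃ L a b R, a ≠ b ∧ l = L ++ a :: b :: R ∧ m.idxOf b < m.idxOf a := by
  have hlen : l.length = m.length := by
    rw [← List.toFinset_card_of_nodup hl, ← List.toFinset_card_of_nodup hm, hfs]
  have hmeml : ∀ {c : Fin d}, c ∈ l → c ∈ m := by
    intro c hc
    rw [← List.mem_toFinset, ← hfs, List.mem_toFinset]
    exact hc
  by_contra hc
  push_neg at hc
  -- every adjacent pair is in increasing m-order
  have hmono : ∀ j, (h : j + 1 < l.length) →
      m.idxOf (l[j]'(by omega)) < m.idxOf (l[j+1]'h) := by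
    intro j h
    have hdecomp : l = l.take j ++ (l[j]'(by omega)) :: (l[j+1]'h) :: l.drop (j+2) := by
      conv_lhs => rw [← List.take_append_drop j l]
      rw [List.drop_eq_getElem_cons (show j < l.length by omega),
        List.drop_eq_getElem_cons (show j + 1 < l.length from h)]
    have hne2 : (l[j]'(by omega)) ≠ (l[j+1]'h) := by
      intro he
      have := (hl.getElem_inj_iff).mp he
      omega
    have hle := hc (l.take j) (l[j]'(by omega)) (l[j+1]'h) (l.drop (j+2)) hne2 hdecomp
    rcases lt_or_eq_of_le hle with h1 | h1
    · exact h1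
    · exfalso
      have hma : (l[j]'(by omega)) ∈ m := hmeml (List.getElem_mem _)
      have hmb : (l[j+1]'h) ∈ m := hmeml (List.getElem_mem _)
      apply hne2
      rw [← List.getElem_idxOf (List.idxOf_lt_length_iff.mpr hma),
        ← List.getElem_idxOf (List.idxOf_lt_length_iff.mpr hmb)]
      congr 1
  -- indexOf in m is the identity on positions, hence l = m
  have hchain : ∀ k j, (h : j + k < l.length) →
      m.idxOf (l[j]'(by omega)) + k ≤ m.idxOf (l[j+k]'h) := by
    intro k
    induction k with
    | zero => intro j h; simp
    | succ k ih =>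
      intro j h
      have h1 := ih j (by omega)
      have h2 := hmono (j + k) (by omega)
      simp only [show j + (k + 1) = (j + k) + 1 from by omega]
      omega
  have hlt : ∀ j, (h : j < l.length) → m.idxOf (l[j]'h) < l.length := by
    intro j h
    rw [hlen]
    exact List.idxOf_lt_length_iff.mpr (hmeml (List.getElem_mem _))
  have hid : ∀ j, (h : j < l.length) → m.idxOf (l[j]'h) = j := by
    intro j h
    have hge := hchain j 0 (by omega)
    simp only [show 0 + j = j from by omega] at hge
    have hle2 := hchain (l.length - 1 - j) j (by omega)
    simp only [show j + (l.length - 1 - j) = l.length - 1 from by omega] at hle2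
    have := hlt (l.length - 1) (by omega)
    omega
  apply hne
  apply List.ext_getElem hlen
  intro j hj hj2
  have hidx := hid j hj
  have hmem2 : (l[j]'hj) ∈ m := hmeml (List.getElem_mem hj)
  have e1 := List.getElem_idxOf (List.idxOf_lt_length_iff.mpr hmem2)
  simp only [hidx] at e1
  exact e1.symm

lemma eq_of_kt_zero {l m : List (Fin d)} (hl : l.Nodup) (hm : m.Nodup)
    (hfs : l.toFinset = m.toFinset) (h0 : kendallTau l m = 0) : l = m := by
  by_contra hne
  obtain ⟨L, a, b, R, hab, hdec, hlt⟩ := exists_dec_swap hl hm hfs hne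
  have hd := kt_swap_dec (m := m) hab (hdec ▸ hl) hlt
  rw [← hdec] at hd
  omega

lemma chain_exists (m : List (Fin d)) (hm : m.Nodup) :
    ∀ n (l : List (Fin d)), l.Nodup → l.toFinset = m.toFinset → kendallTau l m = n →
    ∃ g : ℕ → List (Fin d), g 0 = l ∧ (∀ i, n ≤ i → g i = m) ∧
      (∀ i, (g i).Nodup ∧ (g i).toFinset = m.toFinset) ∧
      (∀ i < n, AdjSwap (g i) (g (i + 1))) := by
  intro n
  induction n with
  | zero =>
    intro l hl hfs h0
    have hlm := eq_of_kt_zero hl hm hfs h0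
    exact ⟨fun _ => m, by rw [hlm], fun i _ => rfl, fun i => ⟨hm, rfl⟩, by omega⟩
  | succ n ih =>
    intro l hl hfs hkt
    have hne : l ≠ m := by
      rintro rfl
      rw [kt_self] at hkt
      omega
    obtain ⟨L, a, b, R, hab, hdec, hlt⟩ := exists_dec_swap hl hm hfs hne
    have hnd1 : (L ++ a :: b :: R).Nodup := hdec ▸ hl
    have hdecr := kt_swap_dec (m := m) hab hnd1 hlt
    have hl'nd : (L ++ b :: a :: R).Nodup := nodup_swap hnd1
    have hperm : (L ++ a :: b :: R).Perm (L ++ b :: a :: R) :=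
      List.Perm.append_left L (List.Perm.swap b a R)
    have hl'fs : (L ++ b :: a :: R).toFinset = m.toFinset := by
      rw [← List.toFinset_eq_of_perm _ _ hperm, ← hdec]
      exact hfs
    have hkt' : kendallTau (L ++ b :: a :: R) m = n := by
      rw [hdec] at hkt
      omega
    obtain ⟨g, hg0, hgm, hginv, hgswap⟩ := ih (L ++ b :: a :: R) hl'nd hl'fs hkt'
    refine ⟨fun i => if i = 0 then l else g (i - 1), by simp, ?_, ?_, ?_⟩
    · intro i hi
      have hi0 : i ≠ 0 := by omega
      simp only [hi0, if_false]
      exact hgm (i - 1) (by omega)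
    · intro i
      by_cases h : i = 0
      · simp [h, hl, hfs]
      · simp only [h, if_false]
        exact hginv (i - 1)
    · intro i hi
      by_cases h : i = 0
      · subst h
        simp only [if_pos rfl, if_neg one_ne_zero]
        rw [show (1 : ℕ) - 1 = 0 from rfl, hg0]
        exact ⟨L, a, b, R, hab, hdec, rfl⟩
      · obtain ⟨k, rfl⟩ := Nat.exists_eq_succ_of_ne_zero h
        simp only [if_neg h, if_neg (Nat.succ_ne_zero _), Nat.succ_sub_one]
        exact hgswap k (by omega)

lemma mkWalk_congr {s t : Fin d → Bool} {l l' : List (Fin d)} (h : l = l')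
    (hl : l.foldl flipv s = t) (hl' : l'.foldl flipv s = t) :
    (mkWalk s l).copy rfl hl = (mkWalk s l').copy rfl hl' := by
  subst h
  rfl

/-- Any two `s`–`t` shortest paths in the Boolean hypercube are reconfigurable, and
the minimum number of reconfiguration steps equals the Kendall tau distance between
their flip sequences. -/
theorem cube_reconfigurable_kendallTau {d : ℕ} (s t : Fin d → Bool)
    (P₁ P₂ : (cube d).Walk s t)
    (h₁ : P₁.length = (cube d).dist s t) (h₂ : P₂.length = (cube d).dist s t) :
    Reconfigurable (cube d) s t P₁ P₂ ∧
      reconfDist (cube d) s t P₁ P₂ = kendallTau (flipSeq P₁) (flipSeq P₂) := by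
  classical
  have hdist : (cube d).dist s t = hamm s t := cube_dist s t
  have h₁' : P₁.length = hamm s t := by rw [← hdist]; exact h₁
  have h₂' : P₂.length = hamm s t := by rw [← hdist]; exact h₂
  obtain ⟨hnd₁, hfs₁⟩ := shortest_flipSeq P₁ h₁'
  obtain ⟨hnd₂, hfs₂⟩ := shortest_flipSeq P₂ h₂'
  have hfs : (flipSeq P₁).toFinset = (flipSeq P₂).toFinset := hfs₁.trans hfs₂.symm
  obtain ⟨g, hg0, hgm, hginv, hgswap⟩ :=
    chain_exists (flipSeq P₂) hnd₂ (kendallTau (flipSeq P₁) (flipSeq P₂)) (flipSeq P₁)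
      hnd₁ hfs rfl
  set n := kendallTau (flipSeq P₁) (flipSeq P₂) with hn
  have hend : ∀ i, (g i).foldl flipv s = t := fun i =>
    foldl_flipv_eq (hginv i).1 ((hginv i).2.trans hfs₂)
  let f : ℕ → (cube d).Walk s t := fun i => (mkWalk s (g i)).copy rfl (hend i)
  have hf0 : f 0 = P₁ := by
    apply walk_eq_of_support_eq
    show ((mkWalk s (g 0)).copy rfl (hend 0)).support = _
    rw [SimpleGraph.Walk.support_copy, support_mkWalk, hg0, ← support_eq_scanl P₁]
  have hfn : f n = P₂ := by
    apply walk_eq_of_support_eq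
    show ((mkWalk s (g n)).copy rfl (hend n)).support = _
    rw [SimpleGraph.Walk.support_copy, support_mkWalk, hgm n le_rfl, ← support_eq_scanl P₂]
  have hlen : ∀ i, (f i).length = (cube d).dist s t := by
    intro i
    show ((mkWalk s (g i)).copy rfl (hend i)).length = _
    rw [SimpleGraph.Walk.length_copy, length_mkWalk, hdist]
    have hcard := List.toFinset_card_of_nodup (hginv i).1
    have h2 : (g i).toFinset = Finset.univ.filter fun j => s j ≠ t j :=
      (hginv i).2.trans hfs₂
    rw [← hcard, h2]
    rfl
  have hstep : ∀ i < n, OneStep (f i).support (f (i + 1)).support := by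
    intro i hi
    obtain ⟨L, a, b, R, hab, e1, e2⟩ := hgswap i hi
    show OneStep ((mkWalk s (g i)).copy rfl (hend i)).support
      ((mkWalk s (g (i + 1))).copy rfl (hend (i + 1))).support
    rw [SimpleGraph.Walk.support_copy, SimpleGraph.Walk.support_copy,
      support_mkWalk, support_mkWalk, e1, e2]
    exact onestep_scanl s L R hab
  constructor
  · have hrec : ∀ i, i ≤ n → Relation.ReflTransGen (ShortestStep (cube d) s t) P₁ (f i) := by
      intro i
      induction i with
      | zero =>
        intro _
        rw [hf0]
      | succ k ih =>
        intro hk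
        exact Relation.ReflTransGen.tail (ih (by omega))
          ⟨hlen k, hlen (k + 1), hstep k (by omega)⟩
    have := hrec n le_rfl
    rwa [hfn] at this
  · have hmem : n ∈ {N : ℕ | ∃ f : ℕ → (cube d).Walk s t, f 0 = P₁ ∧ f N = P₂ ∧
        (∀ i ≤ N, (f i).length = (cube d).dist s t) ∧
        ∀ i < N, OneStep (f i).support (f (i + 1)).support} :=
      ⟨f, hf0, hfn, fun i _ => hlen i, hstep⟩
    apply _root_.le_antisymm
    · exact Nat.sInf_le hmem
    · apply le_csInf ⟨n, hmem⟩
      rintro N ⟨f', hf'0, hf'N, hf'len, hf'step⟩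
      have key : ∀ i, i ≤ N → kendallTau (flipSeq (f' (N - i))) (flipSeq P₂) ≤ i := by
        intro i
        induction i with
        | zero =>
          intro _
          simp [hf'N, kt_self]
        | succ k ih =>
          intro hk
          have hj : N - (k + 1) + 1 = N - k := by omega
          have hjN : N - (k + 1) < N := by omega
          have hs1 := shortest_flipSeq (f' (N - (k + 1)))
            ((hf'len _ (by omega)).trans hdist)
          have hs2 := shortest_flipSeq (f' (N - (k + 1) + 1))
            ((hf'len _ (by omega)).trans hdist)
          obtain ⟨L, a, b, R, hab, e1, e2⟩ :=
            adjswap_of_onestep (f' (N - (k + 1))) (f' (N - (k + 1) + 1)) hs1.1 hs2.1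
              (hf'step _ hjN)
          have hnd1 : (L ++ a :: b :: R).Nodup := e1 ▸ hs1.1
          have hd := kt_swap_or (m := flipSeq P₂) hab hnd1
          have ihk := ih (by omega)
          rw [← hj, e2] at ihk
          rw [e1]
          omega
      have hkey := key N le_rfl
      rw [Nat.sub_self, hf'0] at hkey
      exact hkey
end

section
/- Let G be a connected simple graph with vertices s and t, and let G′ be the spanning subgraph of G whose edge set consists of exactly those edges uv of G with |d_G(s,u) − d_G(s,v)| = 1. Then: (i) G′ is bipartite; (ii) a path is an s–t shortest path in G if and only if it is an s–t shortest path in G′; and (iii) two s–t shortest paths are reconfigurable in G if and only if they are reconfigurable in G′. -/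
/-- The spanning subgraph of `G` keeping exactly those edges `uv` with
`|d(s,u) − d(s,v)| = 1`. -/
def levelGraph {V : Type*} (G : SimpleGraph V) (s : V) : SimpleGraph V where
  Adj u v := G.Adj u v ∧ (G.dist s u + 1 = G.dist s v ∨ G.dist s v + 1 = G.dist s u)
  symm := ⟨fun u v h => ⟨h.1.symm, h.2.symm⟩⟩
  loopless := ⟨fun u h => h.1.ne rfl⟩

theorem levelGraph_le {V : Type*} (G : SimpleGraph V) (s : V) : levelGraph G s ≤ G := by
  intro u v h; exact h.1

section Aux

open SimpleGraph

variable {V : Type*} {G : SimpleGraph V}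

/-- Along a walk realizing the distance, each dart goes one level further from `s`. -/
lemma dart_dist_aux (hconn : G.Connected) (s : V) :
    ∀ {a v : V} (p : G.Walk a v), G.dist s a + p.length = G.dist s v →
      ∀ d ∈ p.darts, G.dist s d.fst + 1 = G.dist s d.snd := by
  intro a v p
  induction p with
  | nil => simp
  | @cons a b v h p ih =>
    intro hlen d hd
    have hab : G.dist a b ≤ 1 := by
      simpa using SimpleGraph.dist_le h.toWalk
    have h1 : G.dist s b ≤ G.dist s a + 1 := by
      have := hconn.dist_triangle (u := s) (v := a) (w := b)
      omega
    have h2 : G.dist s v ≤ G.dist s b + p.length := by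
      have := hconn.dist_triangle (u := s) (v := b) (w := v)
      have := SimpleGraph.dist_le p
      omega
    simp only [Walk.length_cons] at hlen
    have hb : G.dist s b = G.dist s a + 1 := by omega
    simp only [Walk.darts_cons, List.mem_cons] at hd
    rcases hd with rfl | hd
    · simpa using hb.symm
    · exact ih (by omega) d hd

/-- Edges of a shortest walk from `s` lie in the level graph. -/
lemma edges_mem_levelGraph (hconn : G.Connected) {s t : V} (p : G.Walk s t)
    (hp : p.length = G.dist s t) :
    ∀ e ∈ p.edges, e ∈ (levelGraph G s).edgeSet := by
  have hdarts := dart_dist_aux hconn s p (by rw [SimpleGraph.dist_self]; omega)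
  intro e he
  rw [Walk.edges] at he
  obtain ⟨d, hd, rfl⟩ := List.mem_map.mp he
  have := hdarts d hd
  exact ⟨d.adj, Or.inl this⟩

lemma mapLe_transfer {H : SimpleGraph V} (hle : H ≤ G) {u v : V} (p : G.Walk u v)
    (hp : ∀ e ∈ p.edges, e ∈ H.edgeSet) :
    (p.transfer H hp).mapLe hle = p := by
  show ((p.transfer H hp).map (Hom.ofLE hle)) = p
  rw [← Walk.transfer_eq_map_ofLE, Walk.transfer_transfer, Walk.transfer_self]
  intro e
  rw [Walk.edges_transfer]
  apply Walk.edges_subset_edgeSet p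

end Aux

/-- For a connected graph `G` and the spanning subgraph `G' = levelGraph G s` of edges
joining consecutive BFS layers from `s`: (i) `G'` is bipartite (2-colorable);
(ii) an `s`–`t` path is shortest in `G'` iff it is shortest in `G`, and every `s`–`t`
shortest path of `G` comes from `G'`; (iii) two `s`–`t` shortest paths are
reconfigurable in `G'` iff they are reconfigurable in `G`. -/
theorem levelGraph_bipartite_shortest_reconf {V : Type*} (G : SimpleGraph V)
    (hconn : G.Connected) (s t : V) :
    (levelGraph G s).Colorable 2 ∧
    (∀ q : (levelGraph G s).Walk s t,
        q.length = (levelGraph G s).dist s t ↔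
          (q.mapLe (levelGraph_le G s)).length = G.dist s t) ∧
    (∀ p : G.Walk s t, p.length = G.dist s t →
        ∃ q : (levelGraph G s).Walk s t, q.mapLe (levelGraph_le G s) = p) ∧
    (∀ q₁ q₂ : (levelGraph G s).Walk s t,
        q₁.length = (levelGraph G s).dist s t →
        q₂.length = (levelGraph G s).dist s t →
        (Reconfigurable (levelGraph G s) s t q₁ q₂ ↔
          Reconfigurable G s t (q₁.mapLe (levelGraph_le G s))
            (q₂.mapLe (levelGraph_le G s)))) := by
  classical
  set G' := levelGraph G s with hG'def
  have hle : G' ≤ G := levelGraph_le G s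
  -- lifting of shortest walks
  have htrans : ∀ p : G.Walk s t, p.length = G.dist s t →
      ∃ q : G'.Walk s t, q.mapLe hle = p := by
    intro p hp
    exact ⟨p.transfer G' (edges_mem_levelGraph hconn p hp),
      mapLe_transfer hle p _⟩
  -- mapped length
  have hlen : ∀ {u v : V} (q : G'.Walk u v), (q.mapLe hle).length = q.length := by
    intro u v q; exact SimpleGraph.Walk.length_map _ q
  -- mapped support
  have hsup : ∀ {u v : V} (q : G'.Walk u v), (q.mapLe hle).support = q.support := by
    intro u v q
    show (q.map _).support = q.support
    rw [SimpleGraph.Walk.support_map]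
    exact List.map_id' q.support
  -- distance equality
  have hdist : G'.dist s t = G.dist s t := by
    obtain ⟨p, hp⟩ := hconn.exists_walk_length_eq_dist s t
    obtain ⟨q₀, hq₀⟩ := htrans p hp
    have h1 : G'.dist s t ≤ G.dist s t := by
      have := SimpleGraph.dist_le q₀
      rw [← hp, ← hq₀, hlen q₀]; exact this
    have h2 : G.dist s t ≤ G'.dist s t := by
      have hreach : G'.Reachable s t := ⟨q₀⟩
      obtain ⟨q, hq⟩ := hreach.exists_walk_length_eq_dist
      have := SimpleGraph.dist_le (q.mapLe hle)
      rw [hlen q, hq] at this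
      exact this
    omega
  -- injectivity of mapLe
  have hinj : Function.Injective (fun q : G'.Walk s t => q.mapLe hle) := by
    apply SimpleGraph.Walk.map_injective_of_injective
    intro a b hab
    simpa [SimpleGraph.Hom.ofLE] using hab
  refine ⟨?_, ?_, htrans, ?_⟩
  · -- bipartite
    refine ⟨SimpleGraph.Coloring.mk (fun v => ⟨G.dist s v % 2, by omega⟩) ?_⟩
    intro u v huv heq
    have h2 := huv.2
    have : G.dist s u % 2 = G.dist s v % 2 := congrArg Fin.val heq
    omega
  · -- shortest iff
    intro q
    rw [hlen q, hdist]
  · -- reconfigurability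
    intro q₁ q₂ hq₁ hq₂
    constructor
    · intro h
      refine Relation.ReflTransGen.lift (fun q : G'.Walk s t => q.mapLe hle) ?_ _ _ h
      intro a b hab
      obtain ⟨ha, hb, hone⟩ := hab
      exact ⟨by rw [hlen a, ha, hdist], by rw [hlen b, hb, hdist],
        by rwa [hsup a, hsup b]⟩
    · intro h
      have key : ∀ (p₂ : G.Walk s t),
          Relation.ReflTransGen (ShortestStep G s t) (q₁.mapLe hle) p₂ →
          ∀ q : G'.Walk s t, q.mapLe hle = p₂ → Reconfigurable G' s t q₁ q := by
        intro p₂ hrt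
        induction hrt with
        | refl =>
          intro q hq
          have : q = q₁ := hinj hq
          rw [this]
          exact Relation.ReflTransGen.refl
        | @tail b c _ hbc ih =>
          intro q hq
          obtain ⟨qb, hqb⟩ := htrans b hbc.1
          refine (ih qb hqb).tail ?_
          have hlb : qb.length = G'.dist s t := by
            rw [← hlen qb, hqb, hbc.1, hdist]
          have hlc : q.length = G'.dist s t := by
            rw [← hlen q, hq, hbc.2.1, hdist]
          refine ⟨hlb, hlc, ?_⟩
          have h1 : qb.support = b.support := by rw [← hsup qb, hqb]
          have h2 : q.support = c.support := by rw [← hsup q, hq]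
          rw [h1, h2]
          exact hbc.2.2
      exact key _ h q₂ rfl
end

section
/- Let G be a simple graph with vertices s and t, let ℓ ≥ 1 be an integer, and let G_ℓ be the graph obtained from G by subdividing every edge exactly ℓ times (replacing each edge by a path with ℓ new internal vertices). If P and Q are two distinct s–t shortest paths in G_ℓ whose vertex sequences agree everywhere except on a single contiguous block of internal positions, then that block consists of at least 2ℓ + 1 vertices. Equivalently, no k′-move between distinct s–t shortest paths in G_ℓ exists for any k′ ≤ 2ℓ. -/
/-- The vertex type of the graph obtained from `G` by subdividing each edge `ℓ`
times: original vertices, plus `ℓ` new vertices for each edge (edges are recorded as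
ordered pairs `(a, b)` with `a < b`). -/
def SubdivVert {V : Type*} [LinearOrder V] (G : SimpleGraph V) (ℓ : ℕ) : Type _ :=
  V ⊕ ({p : V × V // G.Adj p.1 p.2 ∧ p.1 < p.2} × Fin ℓ)

/-- The graph obtained from `G` by subdividing every edge exactly `ℓ` times: each
edge `ab` (with `a < b`) is replaced by the path `a, x₁, …, x_ℓ, b` on new vertices
`x₁, …, x_ℓ`. -/
def subdivide {V : Type*} [LinearOrder V] (G : SimpleGraph V) (ℓ : ℕ) :
    SimpleGraph (SubdivVert G ℓ) where
  Adj x y :=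
    match x, y with
    | Sum.inl _, Sum.inl _ => False
    | Sum.inl u, Sum.inr (e, i) =>
        (u = e.1.1 ∧ (i : ℕ) = 0) ∨ (u = e.1.2 ∧ (i : ℕ) = ℓ - 1)
    | Sum.inr (e, i), Sum.inl v =>
        (v = e.1.1 ∧ (i : ℕ) = 0) ∨ (v = e.1.2 ∧ (i : ℕ) = ℓ - 1)
    | Sum.inr (e, i), Sum.inr (f, j) =>
        e = f ∧ ((i : ℕ) + 1 = (j : ℕ) ∨ (j : ℕ) + 1 = (i : ℕ))
  symm := by
    constructor
    rintro (u | ⟨e, i⟩) (v | ⟨f, j⟩) h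
    · exact h
    · exact h
    · exact h
    · exact ⟨h.1.symm, h.2.symm⟩
  loopless := by
    constructor
    rintro (u | ⟨e, i⟩) h
    · exact h
    · rcases h with ⟨-, h | h⟩ <;> omega

attribute [reducible] SubdivVert

namespace SubdivAux

open SimpleGraph

variable {V : Type*} [LinearOrder V] {G : SimpleGraph V} {ℓ : ℕ}

abbrev Edge (G : SimpleGraph V) := {p : V × V // G.Adj p.1 p.2 ∧ p.1 < p.2}

/-- interior vertex number `k` of edge `e` (junk if `k ≥ ℓ`). -/
def mkv (e : Edge G) (k : ℕ) : SubdivVert G ℓ :=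
  if h : k < ℓ then Sum.inr (e, ⟨k, h⟩) else Sum.inl e.1.1

lemma mkv_of_lt (e : Edge G) {k : ℕ} (h : k < ℓ) :
    (mkv e k : SubdivVert G ℓ) = Sum.inr (e, ⟨k, h⟩) := dif_pos h

lemma mkv_fin (e : Edge G) (j : Fin ℓ) : (mkv e (j : ℕ) : SubdivVert G ℓ) = Sum.inr (e, j) := by
  rw [mkv_of_lt e j.isLt]

def run (e : Edge G) (s n : ℕ) : List (SubdivVert G ℓ) :=
  (List.range n).map (fun d => mkv e (s + d))

def run' (e : Edge G) (s n : ℕ) : List (SubdivVert G ℓ) :=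
  (List.range n).map (fun d => mkv e (s - d))

@[simp] lemma run_length (e : Edge G) (s n : ℕ) : (run (ℓ := ℓ) e s n).length = n := by
  simp [run]

@[simp] lemma run'_length (e : Edge G) (s n : ℕ) : (run' (ℓ := ℓ) e s n).length = n := by
  simp [run']

lemma run_succ (e : Edge G) (s n : ℕ) :
    (run (ℓ := ℓ) e s (n + 1)) = mkv e s :: run e (s + 1) n := by
  unfold run
  rw [List.range_succ_eq_map, List.map_cons, List.map_map]
  refine congrArg₂ _ (by simp) ?_
  apply List.map_congr_left
  intro d _
  simp only [Function.comp_apply]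
  congr 1
  omega

lemma run'_succ (e : Edge G) (s n : ℕ) :
    (run' (ℓ := ℓ) e s (n + 1)) = mkv e s :: run' e (s - 1) n := by
  unfold run'
  rw [List.range_succ_eq_map, List.map_cons, List.map_map]
  refine congrArg₂ _ (by simp) ?_
  apply List.map_congr_left
  intro d _
  simp only [Function.comp_apply]
  congr 1
  omega

lemma mem_run (e : Edge G) {s n : ℕ} {z : SubdivVert G ℓ} (hz : z ∈ run (ℓ := ℓ) e s n)
    (hbound : s + n ≤ ℓ) : ∃ i : Fin ℓ, z = Sum.inr (e, i) := by
  simp only [run, List.mem_map, List.mem_range] at hz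
  obtain ⟨d, hd, rfl⟩ := hz
  exact ⟨⟨s + d, by omega⟩, mkv_of_lt e (by omega)⟩

lemma mem_run' (e : Edge G) {s n : ℕ} {z : SubdivVert G ℓ} (hz : z ∈ run' (ℓ := ℓ) e s n)
    (hbound : s < ℓ) : ∃ i : Fin ℓ, z = Sum.inr (e, i) := by
  simp only [run', List.mem_map, List.mem_range] at hz
  obtain ⟨d, hd, rfl⟩ := hz
  exact ⟨⟨s - d, by omega⟩, mkv_of_lt e (by omega)⟩

def edgeOf (u v : V) (h : G.Adj u v) : Edge G :=
  if hlt : u < v then ⟨(u, v), h, hlt⟩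
  else ⟨(v, u), h.symm, (h.ne.lt_or_gt.resolve_left hlt)⟩

lemma edgeOf_left_inj {u x y : V} (h1 : G.Adj u x) (h2 : G.Adj u y)
    (hE : edgeOf u x h1 = edgeOf u y h2) : x = y := by
  unfold edgeOf at hE
  split_ifs at hE <;>
    simp only [Subtype.mk.injEq, Prod.mk.injEq] at hE
  · exact hE.2
  · exact absurd hE.2 h1.ne'
  · exact absurd hE.1 h1.ne'
  · exact hE.1

lemma edgeOf_right_inj {u x y : V} (h1 : G.Adj x u) (h2 : G.Adj y u)
    (hE : edgeOf x u h1 = edgeOf y u h2) : x = y := by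
  unfold edgeOf at hE
  split_ifs at hE <;>
    simp only [Subtype.mk.injEq, Prod.mk.injEq] at hE
  · exact hE.1
  · exact absurd hE.1 h1.ne
  · exact absurd hE.2 h1.ne
  · exact hE.2


open scoped Classical in
noncomputable def seg (G : SimpleGraph V) (ℓ : ℕ) (u v : V) : List (SubdivVert G ℓ) :=
  if h : G.Adj u v ∧ u < v then run ⟨(u, v), h⟩ 0 ℓ
  else if h' : G.Adj v u ∧ v < u then run' ⟨(v, u), h'⟩ (ℓ - 1) ℓ
  else []

lemma seg_of_lt {u v : V} (h : G.Adj u v) (hlt : u < v) :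
    seg G ℓ u v = run ⟨(u, v), h, hlt⟩ 0 ℓ := by
  rw [seg, dif_pos ⟨h, hlt⟩]

lemma seg_of_gt {u v : V} (h : G.Adj u v) (hlt : v < u) :
    seg G ℓ u v = run' ⟨(v, u), h.symm, hlt⟩ (ℓ - 1) ℓ := by
  rw [seg, dif_neg (fun hc => absurd hlt (asymm hc.2)), dif_pos ⟨h.symm, hlt⟩]

lemma seg_length {u v : V} (h : G.Adj u v) : (seg G ℓ u v).length = ℓ := by
  rcases h.ne.lt_or_gt with hlt | hlt
  · rw [seg_of_lt h hlt]; simp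
  · rw [seg_of_gt h hlt]; simp

lemma mem_seg {u v : V} (h : G.Adj u v) {z : SubdivVert G ℓ} (hz : z ∈ seg G ℓ u v)
    (hℓ : 1 ≤ ℓ) : ∃ i : Fin ℓ, z = Sum.inr (edgeOf u v h, i) := by
  rcases h.ne.lt_or_gt with hlt | hlt
  · rw [seg_of_lt h hlt] at hz
    have := mem_run _ hz (by omega)
    rwa [show (⟨(u, v), h, hlt⟩ : Edge G) = edgeOf u v h from by
      rw [edgeOf, dif_pos hlt]] at this
  · rw [seg_of_gt h hlt] at hz
    have := mem_run' _ hz (by omega)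
    rwa [show (⟨(v, u), h.symm, hlt⟩ : Edge G) = edgeOf u v h from by
      rw [edgeOf, dif_neg (asymm hlt)]] at this

noncomputable def expand (G : SimpleGraph V) (ℓ : ℕ) : List V → List (SubdivVert G ℓ)
  | [] => []
  | [u] => [Sum.inl u]
  | u :: v :: rest => Sum.inl u :: (seg G ℓ u v ++ expand G ℓ (v :: rest))

@[simp] lemma expand_nil : expand G ℓ ([] : List V) = [] := by rw [expand]

@[simp] lemma expand_single (u : V) : expand G ℓ [u] = [Sum.inl u] := by rw [expand]

@[simp] lemma expand_cons_cons (u v : V) (rest : List V) :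
    expand G ℓ (u :: v :: rest) = Sum.inl u :: (seg G ℓ u v ++ expand G ℓ (v :: rest)) := by
  rw [expand]

lemma expand_length (W : G.Walk u v) :
    (expand G ℓ W.support).length = W.length * (ℓ + 1) + 1 := by
  induction W with
  | nil => simp
  | @cons a b c h p ih =>
    rw [Walk.support_cons, p.support_eq_cons, expand_cons_cons, ← p.support_eq_cons]
    simp only [List.length_cons, List.length_append, seg_length h, ih, Walk.length_cons]
    ring

lemma expand_getElem?_mul (W : G.Walk u v) (k : ℕ) :
    (expand G ℓ W.support)[k * (ℓ + 1)]? = (W.support[k]?).map Sum.inl := by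
  induction W generalizing k with
  | nil =>
    cases k with
    | zero => simp
    | succ k =>
      have h1 : (1 : ℕ) ≤ (k + 1) * (ℓ + 1) := Nat.mul_pos k.succ_pos ℓ.succ_pos
      simp only [Walk.support_nil, expand_single]
      rw [List.getElem?_eq_none (by simpa using h1), List.getElem?_eq_none (by simp)]
      simp
  | @cons a b c h p ih =>
    rw [Walk.support_cons, p.support_eq_cons, expand_cons_cons, ← p.support_eq_cons]
    cases k with
    | zero => simp
    | succ k =>
      have hidx : (k + 1) * (ℓ + 1) = (k * (ℓ + 1) + ℓ) + 1 := by ring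
      rw [hidx, List.getElem?_cons_succ,
        List.getElem?_append_right (by rw [seg_length h]; omega),
        seg_length h, show k * (ℓ + 1) + ℓ - ℓ = k * (ℓ + 1) from by omega, ih,
        List.getElem?_cons_succ]

lemma expand_getElem?_interior (hℓ : 1 ≤ ℓ) (W : G.Walk u v) (k r : ℕ)
    (hr1 : 1 ≤ r) (hr2 : r ≤ ℓ) (hk : k + 1 ≤ W.length) :
    ∃ (w₁ w₂ : V) (h : G.Adj w₁ w₂) (i : Fin ℓ),
      W.support[k]? = some w₁ ∧ W.support[k + 1]? = some w₂ ∧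
      (expand G ℓ W.support)[k * (ℓ + 1) + r]? = some (Sum.inr (edgeOf w₁ w₂ h, i)) := by
  induction W generalizing k with
  | nil => simp at hk
  | @cons a b c h p ih =>
    rw [Walk.support_cons, p.support_eq_cons, expand_cons_cons, ← p.support_eq_cons]
    cases k with
    | zero =>
      have hlen : r - 1 < (seg G ℓ a b).length := by rw [seg_length h]; omega
      have hval : (seg G ℓ a b)[r - 1]'hlen ∈ seg G ℓ a b := List.getElem_mem hlen
      obtain ⟨i, hi⟩ := mem_seg h hval hℓ
      refine ⟨a, b, h, i, by simp, ?_, ?_⟩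
      · rw [List.getElem?_cons_succ, p.support_eq_cons, List.getElem?_cons_zero]
      · rw [show (0 : ℕ) * (ℓ + 1) + r = (r - 1) + 1 from by omega, List.getElem?_cons_succ,
          List.getElem?_append_left hlen, List.getElem?_eq_getElem hlen, hi]
    | succ k =>
      have hk' : k + 1 ≤ p.length := by simpa using hk
      obtain ⟨w₁, w₂, hadj, i, h1, h2, h3⟩ := ih k hk'
      refine ⟨w₁, w₂, hadj, i, ?_, ?_, ?_⟩
      · rw [List.getElem?_cons_succ]; exact h1
      · rw [List.getElem?_cons_succ]; exact h2
      · have hidx : (k + 1) * (ℓ + 1) + r = ((k * (ℓ + 1) + r) + ℓ) + 1 := by ring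
        rw [hidx, List.getElem?_cons_succ,
          List.getElem?_append_right (by rw [seg_length h]; omega), seg_length h,
          show k * (ℓ + 1) + r + ℓ - ℓ = k * (ℓ + 1) + r from by omega, h3]

lemma support_getElem? (W : G.Walk u v) : ∀ k, k ≤ W.length →
    W.support[k]? = some (W.getVert k) := by
  induction W with
  | nil =>
    intro k hk
    simp only [Walk.length_nil, Nat.le_zero] at hk
    subst hk
    simp
  | @cons a b c h p ih =>
    intro k hk
    cases k with
    | zero => simp [Walk.getVert_zero]
    | succ k =>
      rw [Walk.support_cons, List.getElem?_cons_succ, Walk.getVert_cons_succ]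
      exact ih k (by simpa using hk)

lemma walk_support_inj {α : Type*} {G' : SimpleGraph α} :
    ∀ {u v : α} (P Q : G'.Walk u v), P.support = Q.support → P = Q := by
  intro u v P
  induction P with
  | nil =>
    intro Q h
    cases Q with
    | nil => rfl
    | cons h' q =>
      rw [Walk.support_nil, Walk.support_cons, q.support_eq_cons] at h
      simp at h
  | @cons a b c h p ih =>
    intro Q hs
    cases Q with
    | nil =>
      rw [Walk.support_nil, Walk.support_cons, p.support_eq_cons] at hs
      simp at hs
    | @cons _ b' _ h' q =>
      rw [Walk.support_cons, Walk.support_cons] at hs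
      have htail : p.support = q.support := by injection hs
      have hb : b = b' := by
        rw [p.support_eq_cons, q.support_eq_cons] at htail
        injection htail
      subst hb
      rw [ih q htail]


lemma run_one (e : Edge G) (s : ℕ) : (run (ℓ := ℓ) e s 1) = [mkv e s] := by
  rw [show (1 : ℕ) = 0 + 1 from rfl, run_succ]
  simp [run]

lemma run'_one (e : Edge G) (s : ℕ) : (run' (ℓ := ℓ) e s 1) = [mkv e s] := by
  rw [show (1 : ℕ) = 0 + 1 from rfl, run'_succ]
  simp [run']

lemma adj_inl_inl {u v : V} (h : (subdivide G ℓ).Adj (Sum.inl u) (Sum.inl v)) : False := h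

lemma adj_inl_inr {u : V} {e : Edge G} {i : Fin ℓ}
    (h : (subdivide G ℓ).Adj (Sum.inl u) (Sum.inr (e, i))) :
    (u = e.1.1 ∧ (i : ℕ) = 0) ∨ (u = e.1.2 ∧ (i : ℕ) = ℓ - 1) := h

lemma adj_inr_inl {u : V} {e : Edge G} {i : Fin ℓ}
    (h : (subdivide G ℓ).Adj (Sum.inr (e, i)) (Sum.inl u)) :
    (u = e.1.1 ∧ (i : ℕ) = 0) ∨ (u = e.1.2 ∧ (i : ℕ) = ℓ - 1) := h

lemma adj_inr_inr {e f : Edge G} {i j : Fin ℓ}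
    (h : (subdivide G ℓ).Adj (Sum.inr (e, i)) (Sum.inr (f, j))) :
    e = f ∧ ((i : ℕ) + 1 = (j : ℕ) ∨ (j : ℕ) + 1 = (i : ℕ)) := h

/-- Statement A at fuel `n`. -/
def StA (G : SimpleGraph V) (ℓ n : ℕ) : Prop :=
  ∀ (x y : V) (W : (subdivide G ℓ).Walk (Sum.inl x) (Sum.inl y)),
    W.length ≤ n → W.IsPath → ∃ W' : G.Walk x y, W.support = expand G ℓ W'.support

/-- Statement B (traversing an edge upwards) at fuel `n`. -/
def StB (G : SimpleGraph V) (ℓ n : ℕ) : Prop :=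
  ∀ (e : Edge G) (i : ℕ) (hi : i < ℓ) (y : V)
    (W : (subdivide G ℓ).Walk (Sum.inr (e, ⟨i, hi⟩)) (Sum.inl y)),
    W.length ≤ n → W.IsPath →
    Sum.inl e.1.1 ∉ W.support →
    (∀ j : Fin ℓ, (j : ℕ) < i → Sum.inr (e, j) ∉ W.support) →
    ∃ W' : G.Walk e.1.2 y, W.support = run e i (ℓ - i) ++ expand G ℓ W'.support

/-- Statement B' (traversing an edge downwards) at fuel `n`. -/
def StB' (G : SimpleGraph V) (ℓ n : ℕ) : Prop :=
  ∀ (e : Edge G) (i : ℕ) (hi : i < ℓ) (y : V)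
    (W : (subdivide G ℓ).Walk (Sum.inr (e, ⟨i, hi⟩)) (Sum.inl y)),
    W.length ≤ n → W.IsPath →
    Sum.inl e.1.2 ∉ W.support →
    (∀ j : Fin ℓ, i < (j : ℕ) → Sum.inr (e, j) ∉ W.support) →
    ∃ W' : G.Walk e.1.1 y, W.support = run' e i (i + 1) ++ expand G ℓ W'.support

lemma decomp_all (G : SimpleGraph V) (ℓ : ℕ) :
    ∀ n : ℕ, StA G ℓ n ∧ StB G ℓ n ∧ StB' G ℓ n := by
  intro n
  induction n using Nat.strong_induction_on with
  | _ n IH =>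
  refine ⟨?_, ?_, ?_⟩
  · -- A
    intro x y W hlen hpath
    cases W with
    | nil => exact ⟨Walk.nil, by simp⟩
    | @cons _ c _ h W₁ =>
      rw [Walk.cons_isPath_iff] at hpath
      obtain ⟨hp₁, hnotmem⟩ := hpath
      rcases c with u | ⟨e, i⟩
      · exact (adj_inl_inl h).elim
      · have hℓpos : 0 < ℓ := i.pos
        have hlen₁ : W₁.length ≤ n - 1 := by
          rw [Walk.length_cons] at hlen; omega
        have hn1 : n - 1 < n := by
          rw [Walk.length_cons] at hlen; omega
        rcases adj_inl_inr h with ⟨hx, hi0⟩ | ⟨hx, hiℓ⟩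
        · -- entered at bottom of e, x = e.1.1
          have hifin : i = ⟨0, hℓpos⟩ := Fin.ext hi0
          subst hifin
          obtain ⟨W', hsup⟩ := (IH (n - 1) hn1).2.1 e 0 hℓpos y W₁ hlen₁ hp₁
            (hx ▸ hnotmem) (fun j hj => absurd hj (Nat.not_lt_zero _))
          subst hx
          refine ⟨Walk.cons e.2.1 W', ?_⟩
          rw [Walk.support_cons, Walk.support_cons, W'.support_eq_cons, expand_cons_cons,
            ← W'.support_eq_cons, seg_of_lt e.2.1 e.2.2]
          have he : (⟨(e.1.1, e.1.2), e.2.1, e.2.2⟩ : Edge G) = e := Subtype.ext (by simp)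
          rw [he, hsup]
          simp
        · -- entered at top of e, x = e.1.2
          have hifin : i = ⟨ℓ - 1, Nat.sub_lt hℓpos Nat.one_pos⟩ := Fin.ext hiℓ
          subst hifin
          obtain ⟨W', hsup⟩ := (IH (n - 1) hn1).2.2 e (ℓ - 1) (Nat.sub_lt hℓpos Nat.one_pos) y
            W₁ hlen₁ hp₁ (hx ▸ hnotmem) (fun j hj => absurd j.isLt (by omega))
          subst hx
          refine ⟨Walk.cons e.2.1.symm W', ?_⟩
          rw [Walk.support_cons, Walk.support_cons, W'.support_eq_cons, expand_cons_cons,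
            ← W'.support_eq_cons, seg_of_gt e.2.1.symm e.2.2]
          have he : (⟨(e.1.1, e.1.2), (e.2.1.symm).symm, e.2.2⟩ : Edge G) = e :=
            Subtype.ext (by simp)
          rw [he, hsup, show (ℓ - 1) + 1 = ℓ from by omega]
  · -- B
    intro e i hi y W hlen hpath h1 h2
    cases W with
    | @cons _ c _ h W₂ =>
      rw [Walk.cons_isPath_iff] at hpath
      obtain ⟨hp₂, hnotmem⟩ := hpath
      have hlen₂ : W₂.length ≤ n - 1 := by
        rw [Walk.length_cons] at hlen; omega
      have hn1 : n - 1 < n := by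
        rw [Walk.length_cons] at hlen; omega
      rcases c with u | ⟨f, j⟩
      · -- step to an original vertex
        rcases adj_inr_inl h with ⟨hu, hi0⟩ | ⟨hu, hiℓ⟩
        · -- u = e.1.1 : contradiction with h1
          refine absurd ?_ h1
          rw [Walk.support_cons]
          exact List.mem_cons_of_mem _ (hu ▸ W₂.start_mem_support)
        · -- u = e.1.2, i = ℓ - 1: exit
          have hiℓ' : i = ℓ - 1 := hiℓ
          subst hu
          obtain ⟨W', hsup⟩ := (IH (n - 1) hn1).1 e.1.2 y W₂ hlen₂ hp₂
          refine ⟨W', ?_⟩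
          rw [show ℓ - i = 1 from by omega, run_one, mkv_of_lt e hi,
            Walk.support_cons, hsup]
          rfl
      · -- step to an interior vertex
        obtain ⟨hef, hcase⟩ := adj_inr_inr h
        subst hef
        rcases hcase with hup | hdown
        · -- j = i + 1 : continue upwards
          have hup' : i + 1 = (j : ℕ) := hup
          have hjlt : i + 1 < ℓ := by have := j.isLt; omega
          have hjfin : j = ⟨i + 1, hjlt⟩ := Fin.ext hup'.symm
          subst hjfin
          have h1' : Sum.inl e.1.1 ∉ W₂.support := by
            intro hmem; exact h1 (by rw [Walk.support_cons]; exact List.mem_cons_of_mem _ hmem)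
          have h2' : ∀ j' : Fin ℓ, (j' : ℕ) < i + 1 → Sum.inr (e, j') ∉ W₂.support := by
            intro j' hj' hmem
            rcases Nat.lt_succ_iff_lt_or_eq.mp hj' with hlt | heq
            · exact h2 j' hlt (by rw [Walk.support_cons]; exact List.mem_cons_of_mem _ hmem)
            · have : j' = ⟨i, hi⟩ := Fin.ext heq
              subst this
              exact hnotmem hmem
          obtain ⟨W', hsup⟩ := (IH (n - 1) hn1).2.1 e (i + 1) hjlt y W₂ hlen₂ hp₂ h1' h2'
          refine ⟨W', ?_⟩
          rw [show ℓ - i = (ℓ - (i + 1)) + 1 from by omega, run_succ, mkv_of_lt e hi,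
            Walk.support_cons, hsup]
          rfl
        · -- j = i - 1 : contradiction with h2
          have hdown' : (j : ℕ) + 1 = i := hdown
          refine absurd ?_ (h2 j (by omega))
          rw [Walk.support_cons]
          exact List.mem_cons_of_mem _ W₂.start_mem_support
  · -- B'
    intro e i hi y W hlen hpath h1 h2
    cases W with
    | @cons _ c _ h W₂ =>
      rw [Walk.cons_isPath_iff] at hpath
      obtain ⟨hp₂, hnotmem⟩ := hpath
      have hlen₂ : W₂.length ≤ n - 1 := by
        rw [Walk.length_cons] at hlen; omega
      have hn1 : n - 1 < n := by
        rw [Walk.length_cons] at hlen; omega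
      rcases c with u | ⟨f, j⟩
      · rcases adj_inr_inl h with ⟨hu, hi0⟩ | ⟨hu, hiℓ⟩
        · -- u = e.1.1, i = 0 : exit
          have hi0' : i = 0 := hi0
          subst hu
          obtain ⟨W', hsup⟩ := (IH (n - 1) hn1).1 e.1.1 y W₂ hlen₂ hp₂
          refine ⟨W', ?_⟩
          rw [show i + 1 = 1 from by omega, run'_one, mkv_of_lt e hi,
            Walk.support_cons, hsup]
          rfl
        · -- u = e.1.2 : contradiction with h1
          refine absurd ?_ h1
          rw [Walk.support_cons]
          exact List.mem_cons_of_mem _ (hu ▸ W₂.start_mem_support)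
      · obtain ⟨hef, hcase⟩ := adj_inr_inr h
        subst hef
        rcases hcase with hup | hdown
        · -- j = i + 1 : contradiction with h2
          have hup' : i + 1 = (j : ℕ) := hup
          refine absurd ?_ (h2 j (by omega))
          rw [Walk.support_cons]
          exact List.mem_cons_of_mem _ W₂.start_mem_support
        · -- j = i - 1 : continue downwards
          have hdown' : (j : ℕ) + 1 = i := hdown
          have hipos : 1 ≤ i := by have := j.isLt; omega
          have hjlt : i - 1 < ℓ := by omega
          have hjfin : j = ⟨i - 1, hjlt⟩ := Fin.ext (show (j : ℕ) = i - 1 by omega)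
          subst hjfin
          have h1' : Sum.inl e.1.2 ∉ W₂.support := by
            intro hmem; exact h1 (by rw [Walk.support_cons]; exact List.mem_cons_of_mem _ hmem)
          have h2' : ∀ j' : Fin ℓ, i - 1 < (j' : ℕ) → Sum.inr (e, j') ∉ W₂.support := by
            intro j' hj' hmem
            rcases Nat.lt_or_ge i (j' : ℕ) with hlt | hge
            · exact h2 j' hlt (by rw [Walk.support_cons]; exact List.mem_cons_of_mem _ hmem)
            · have hji : (j' : ℕ) = i := by omega
              have : j' = ⟨i, hi⟩ := Fin.ext hji
              subst this
              exact hnotmem hmem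
          obtain ⟨W', hsup⟩ := (IH (n - 1) hn1).2.2 e (i - 1) hjlt y W₂ hlen₂ hp₂ h1' h2'
          refine ⟨W', ?_⟩
          rw [show i + 1 = (i - 1 + 1) + 1 from by omega, run'_succ, mkv_of_lt e hi,
            Walk.support_cons, hsup]
          rfl

lemma decomp (G : SimpleGraph V) (ℓ : ℕ) {x y : V}
    (W : (subdivide G ℓ).Walk (Sum.inl x) (Sum.inl y)) (hW : W.IsPath) :
    ∃ W' : G.Walk x y, W.support = expand G ℓ W'.support :=
  (decomp_all G ℓ W.length).1 x y W le_rfl hW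

end SubdivAux

/-- `kMove k l₁ l₂`: the two vertex sequences have the same length and agree
everywhere except possibly on a contiguous block of at most `k` internal positions. -/
def kMove {α : Type*} (k : ℕ) (l₁ l₂ : List α) : Prop :=
  l₁.length = l₂.length ∧
    ∃ a m : ℕ, m ≤ k ∧ 1 ≤ a ∧ a + m + 1 ≤ l₁.length ∧
      ∀ j : ℕ, j < a ∨ a + m ≤ j → l₁[j]? = l₂[j]?

open SimpleGraph SubdivAux

/-- In the `ℓ`-fold subdivision of `G`, if two distinct `s`–`t` shortest paths agree
everywhere except on a single contiguous block of internal positions, then that block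
has at least `2ℓ + 1` positions; equivalently, no `k'`-move between distinct `s`–`t`
shortest paths exists for `k' ≤ 2ℓ`. -/
theorem subdivide_no_short_move {V : Type*} [LinearOrder V] (G : SimpleGraph V)
    (ℓ : ℕ) (hℓ : 1 ≤ ℓ) (s t : V)
    (P Q : (subdivide G ℓ).Walk (Sum.inl s) (Sum.inl t))
    (hP : P.length = (subdivide G ℓ).dist (Sum.inl s) (Sum.inl t))
    (hQ : Q.length = (subdivide G ℓ).dist (Sum.inl s) (Sum.inl t))
    (hne : P ≠ Q) :
    (∀ a m : ℕ, 1 ≤ a → a + m + 1 ≤ P.support.length →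
        (∀ j : ℕ, j < a ∨ a + m ≤ j → P.support[j]? = Q.support[j]?) →
        2 * ℓ + 1 ≤ m) ∧
    ∀ k' : ℕ, k' ≤ 2 * ℓ → ¬ kMove k' P.support Q.support := by
  classical
  have hPp : P.IsPath := P.isPath_of_length_eq_dist hP
  have hQp : Q.IsPath := Q.isPath_of_length_eq_dist hQ
  obtain ⟨WP, hWP⟩ := decomp G ℓ P hPp
  obtain ⟨WQ, hWQ⟩ := decomp G ℓ Q hQp
  have hlenP : WP.length * (ℓ + 1) + 1 = P.length + 1 := by
    rw [← expand_length, ← hWP, Walk.length_support]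
  have hlenQ : WQ.length * (ℓ + 1) + 1 = Q.length + 1 := by
    rw [← expand_length, ← hWQ, Walk.length_support]
  have hNN : WP.length = WQ.length := by
    apply Nat.eq_of_mul_eq_mul_right (show 0 < ℓ + 1 by omega)
    omega
  have main : ∀ a m : ℕ,
      (∀ j : ℕ, j < a ∨ a + m ≤ j → P.support[j]? = Q.support[j]?) → 2 * ℓ + 1 ≤ m := by
    intro a m hagree
    have hLne : WP.support ≠ WQ.support := by
      intro hEq
      exact hne (walk_support_inj P Q (by rw [hWP, hWQ, hEq]))
    have hex : ∃ k : ℕ, WP.support[k]? ≠ WQ.support[k]? := by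
      by_contra hc
      push_neg at hc
      exact hLne (List.ext_getElem? hc)
    set N := WP.length with hN
    have hs0P : WP.support[0]? = some s := by
      rw [support_getElem? WP 0 (Nat.zero_le _), Walk.getVert_zero]
    have hs0Q : WQ.support[0]? = some s := by
      rw [support_getElem? WQ 0 (Nat.zero_le _), Walk.getVert_zero]
    have hsNP : WP.support[N]? = some t := by
      rw [support_getElem? WP N le_rfl, Walk.getVert_length]
    have hsNQ : WQ.support[N]? = some t := by
      rw [support_getElem? WQ N hNN.le, hNN, Walk.getVert_length]
    set kmin := Nat.find hex with hkmin
    have hfind : WP.support[kmin]? ≠ WQ.support[kmin]? := Nat.find_spec hex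
    have hk1 : 1 ≤ kmin := by
      rcases Nat.eq_zero_or_pos kmin with h0 | h; swap
      · exact h
      · rw [h0] at hfind
        exact absurd (hs0P.trans hs0Q.symm) hfind
    have hkN : kmin ≤ N := by
      by_contra hc
      push_neg at hc
      apply hfind
      rw [List.getElem?_eq_none (by rw [Walk.length_support]; omega),
        List.getElem?_eq_none (by rw [Walk.length_support]; omega)]
    set kmax := Nat.findGreatest (fun k => WP.support[k]? ≠ WQ.support[k]?) N with hkmax
    have hkmax_spec : WP.support[kmax]? ≠ WQ.support[kmax]? := by
      exact Nat.findGreatest_spec (P := fun k => WP.support[k]? ≠ WQ.support[k]?) hkN hfind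
    have hminmax : kmin ≤ kmax :=
      Nat.le_findGreatest (P := fun k => WP.support[k]? ≠ WQ.support[k]?) hkN hfind
    have hkmaxN : kmax < N := by
      rcases lt_or_eq_of_le (Nat.findGreatest_le (P := fun k => WP.support[k]? ≠ WQ.support[k]?) N) with h | h
      · exact h
      · rw [hkmax, h] at hkmax_spec
        exact absurd (hsNP.trans hsNQ.symm) hkmax_spec
    have hagree_min : WP.support[kmin - 1]? = WQ.support[kmin - 1]? :=
      not_not.mp (Nat.find_min hex (show kmin - 1 < kmin by omega))
    have hagree_max : WP.support[kmax + 1]? = WQ.support[kmax + 1]? :=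
      not_not.mp (Nat.findGreatest_is_greatest (Nat.lt_succ_self kmax) (by omega))
    -- left boundary: position (kmin-1)*(ℓ+1)+1 differs
    obtain ⟨w₁, w₂, hadj, i, hP1, hP2, hPv⟩ :=
      expand_getElem?_interior hℓ WP (kmin - 1) 1 le_rfl hℓ (by omega)
    obtain ⟨w₁', w₂', hadj', i', hQ1, hQ2, hQv⟩ :=
      expand_getElem?_interior hℓ WQ (kmin - 1) 1 le_rfl hℓ (by omega)
    rw [show kmin - 1 + 1 = kmin from by omega] at hP2 hQ2
    obtain rfl : w₁ = w₁' := by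
      have := hagree_min
      rw [hP1, hQ1, Option.some.injEq] at this
      exact this
    have hw2 : w₂ ≠ w₂' := by
      intro hEq
      exact hfind (by rw [hP2, hQ2, hEq])
    have hdiff1 : P.support[(kmin - 1) * (ℓ + 1) + 1]? ≠
        Q.support[(kmin - 1) * (ℓ + 1) + 1]? := by
      rw [hWP, hWQ, hPv, hQv]
      intro hsome
      rw [Option.some.injEq, Sum.inr.injEq, Prod.mk.injEq] at hsome
      exact hw2 (edgeOf_left_inj hadj hadj' hsome.1)
    have hin1 : ¬((kmin - 1) * (ℓ + 1) + 1 < a ∨ a + m ≤ (kmin - 1) * (ℓ + 1) + 1) :=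
      fun hj => hdiff1 (hagree _ hj)
    push_neg at hin1
    -- right boundary: position kmax*(ℓ+1)+ℓ differs
    obtain ⟨v₁, v₂, gadj, iv, gP1, gP2, gPv⟩ :=
      expand_getElem?_interior hℓ WP kmax ℓ hℓ le_rfl (by omega)
    obtain ⟨v₁', v₂', gadj', iv', gQ1, gQ2, gQv⟩ :=
      expand_getElem?_interior hℓ WQ kmax ℓ hℓ le_rfl (by omega)
    obtain rfl : v₂ = v₂' := by
      have := hagree_max
      rw [gP2, gQ2, Option.some.injEq] at this
      exact this
    have hv1 : v₁ ≠ v₁' := by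
      intro hEq
      exact hkmax_spec (by rw [gP1, gQ1, hEq])
    have hdiff2 : P.support[kmax * (ℓ + 1) + ℓ]? ≠ Q.support[kmax * (ℓ + 1) + ℓ]? := by
      rw [hWP, hWQ, gPv, gQv]
      intro hsome
      rw [Option.some.injEq, Sum.inr.injEq, Prod.mk.injEq] at hsome
      exact hv1 (edgeOf_right_inj gadj gadj' hsome.1)
    have hin2 : ¬(kmax * (ℓ + 1) + ℓ < a ∨ a + m ≤ kmax * (ℓ + 1) + ℓ) :=
      fun hj => hdiff2 (hagree _ hj)
    push_neg at hin2
    -- arithmetic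
    have hmul : (kmin - 1) * (ℓ + 1) + (ℓ + 1) ≤ kmax * (ℓ + 1) := by
      calc (kmin - 1) * (ℓ + 1) + (ℓ + 1) = ((kmin - 1) + 1) * (ℓ + 1) := by ring
        _ ≤ kmax * (ℓ + 1) := Nat.mul_le_mul_right _ (by omega)
    obtain ⟨hin1a, hin1b⟩ := hin1
    obtain ⟨hin2a, hin2b⟩ := hin2
    generalize hA : (kmin - 1) * (ℓ + 1) = A at hin1a hin1b hmul
    generalize hB : kmax * (ℓ + 1) = B at hin2a hin2b hmul
    omega
  refine ⟨fun a m _ _ hag => main a m hag, ?_⟩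
  rintro k' hk' ⟨-, a, m, hm, -, -, hag⟩
  have := main a m hag
  omega
end

section
/- Let G be a simple graph on n vertices with vertices s and t, and let k be an integer with k ≥ n/2. Then any two s–t shortest paths in G are k-reconfigurable. -/
/-- One `k`-move between `s`–`t` shortest paths. -/
def KStep {V : Type*} (G : SimpleGraph V) (s t : V) (k : ℕ) (p q : G.Walk s t) : Prop :=
  p.length = G.dist s t ∧ q.length = G.dist s t ∧ kMove k p.support q.support

/-- Two `s`–`t` shortest paths are `k`-reconfigurable if they are joined by a
sequence of `s`–`t` shortest paths in which consecutive paths differ by a `k`-move. -/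
def KReconfigurable {V : Type*} (G : SimpleGraph V) (s t : V) (k : ℕ)
    (p q : G.Walk s t) : Prop :=
  Relation.ReflTransGen (KStep G s t k) p q

/-- The minimum number of `k`-moves needed to transform one `s`–`t` shortest path
into another. -/
noncomputable def kReconfDist {V : Type*} (G : SimpleGraph V) (s t : V) (k : ℕ)
    (P Q : G.Walk s t) : ℕ :=
  sInf {n : ℕ | ∃ f : ℕ → G.Walk s t, f 0 = P ∧ f n = Q ∧
    (∀ i ≤ n, (f i).length = G.dist s t) ∧
    ∀ i < n, kMove k (f i).support (f (i + 1)).support}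

/-- The `k`-SPR reconfiguration graph of `(G, s, t)`: one vertex for each `s`–`t`
shortest path, two paths being adjacent when they differ by a `k`-move. -/
def kSPRGraph {V : Type*} (G : SimpleGraph V) (s t : V) (k : ℕ) :
    SimpleGraph {p : G.Walk s t // p.length = G.dist s t} where
  Adj p q := p ≠ q ∧ kMove k p.1.support q.1.support
  symm := by
    refine ⟨?_⟩
    rintro p q ⟨hne, hlen, a, m, h1, h2, h3, h4⟩
    exact ⟨hne.symm, hlen.symm, a, m, h1, h2, hlen ▸ h3, fun j hj => (h4 j hj).symm⟩
  loopless := by refine ⟨?_⟩; intro p h; exact h.1 rfl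

namespace KRAux

variable {V : Type*} {G : SimpleGraph V}

lemma length_drop {u v : V} (p : G.Walk u v) (n : ℕ) :
    (p.drop n).length = p.length - n := by
  induction p generalizing n with
  | nil => cases n <;> simp [SimpleGraph.Walk.drop]
  | cons h p ih =>
    cases n with
    | zero => simp [SimpleGraph.Walk.drop]
    | succ n => simp [SimpleGraph.Walk.drop, ih]

lemma getVert_mem_support {u v : V} (p : G.Walk u v) (i : ℕ) :
    p.getVert i ∈ p.support := by
  induction p generalizing i with
  | nil => simp [SimpleGraph.Walk.getVert]
  | cons h p ih =>
    cases i with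
    | zero => simp
    | succ i =>
      simp only [SimpleGraph.Walk.getVert_cons_succ, SimpleGraph.Walk.support_cons,
        List.mem_cons]
      exact Or.inr (ih i)

lemma support_getElem? {u v : V} (p : G.Walk u v) (j : ℕ) :
    p.support[j]? = if j ≤ p.length then some (p.getVert j) else none := by
  induction p generalizing j with
  | nil => cases j <;> simp [SimpleGraph.Walk.getVert]
  | cons h p ih =>
    cases j with
    | zero => simp
    | succ j => simpa using ih j

lemma support_inj : ∀ {u v : V} (p q : G.Walk u v), p.support = q.support → p = q := by
  intro u v p
  induction p with
  | nil =>
    intro q hq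
    cases q with
    | nil => rfl
    | cons h q =>
      exfalso; have := congrArg List.length hq
      simp [SimpleGraph.Walk.length_support] at this
  | @cons u w v h p ih =>
    intro q hq
    cases q with
    | nil =>
      exfalso; have := congrArg List.length hq
      simp [SimpleGraph.Walk.length_support] at this
    | @cons _ w' _ h' q =>
      simp only [SimpleGraph.Walk.support_cons, List.cons.injEq] at hq
      have hw : w = w' := by
        have h1 := p.support_eq_cons
        have h2 := q.support_eq_cons
        rw [h1, h2] at hq
        exact ((List.cons.injEq _ _ _ _).mp hq.2).1
      subst hw
      rw [ih q hq.2]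

lemma dist_getVert {s t : V} (p : G.Walk s t) (hp : p.length = G.dist s t) {i : ℕ}
    (hi : i ≤ p.length) :
    G.dist s (p.getVert i) = i ∧ G.dist (p.getVert i) t = p.length - i := by
  have hv : p.reverse.getVert (p.length - i) = p.getVert i := by
    rw [SimpleGraph.Walk.getVert_reverse]; congr 1; omega
  have h2 : G.dist (p.getVert i) t ≤ p.length - i := by
    have := SimpleGraph.dist_le (p.drop i)
    rwa [length_drop] at this
  have h1 : G.dist s (p.getVert i) ≤ i := by
    have := SimpleGraph.dist_le ((p.reverse.drop (p.length - i)).copy hv rfl)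
    rw [SimpleGraph.Walk.length_copy, length_drop, SimpleGraph.Walk.length_reverse] at this
    rw [SimpleGraph.dist_comm]
    exact this.trans (by omega)
  have h3 : G.dist s t ≤ G.dist s (p.getVert i) + G.dist (p.getVert i) t := by
    have r1 : G.Reachable s (p.getVert i) :=
      ⟨((p.reverse.drop (p.length - i)).copy hv rfl).reverse⟩
    have r2 : G.Reachable (p.getVert i) t := ⟨p.drop i⟩
    obtain ⟨q1, hq1⟩ := r1.exists_walk_length_eq_dist
    obtain ⟨q2, hq2⟩ := r2.exists_walk_length_eq_dist
    have := SimpleGraph.dist_le (q1.append q2)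
    rwa [SimpleGraph.Walk.length_append, hq1, hq2] at this
  constructor <;> omega

end KRAux

/-- If `k ≥ n/2`, any two `s`–`t` shortest paths in a simple graph on `n` vertices
are `k`-reconfigurable. -/
theorem kReconfigurable_of_half {V : Type*} [Fintype V] (G : SimpleGraph V)
    (s t : V) (n k : ℕ) (hn : Fintype.card V = n) (hk₁ : 1 ≤ k) (hk : n ≤ 2 * k)
    (P Q : G.Walk s t) (hP : P.length = G.dist s t) (hQ : Q.length = G.dist s t) :
    KReconfigurable G s t k P Q := by
  classical
  obtain ⟨d, hd⟩ : ∃ d, G.dist s t = d := ⟨_, rfl⟩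
  rw [hd] at hP hQ
  by_cases hPQ : P = Q
  · subst hPQ; exact Relation.ReflTransGen.refl
  by_cases hdk : d ≤ k + 1
  · -- one move suffices
    have hd1 : 1 ≤ d := by
      by_contra h0
      have h0 : d = 0 := by omega
      apply hPQ
      apply KRAux.support_inj
      have e1 : P.support = [s] := by
        have hc := P.support_eq_cons
        have hlen : P.support.length = 1 := by
          rw [SimpleGraph.Walk.length_support, hP, h0]
        rw [hc] at hlen ⊢
        simp only [List.length_cons, Nat.add_eq_right, Nat.succ.injEq] at hlen
        rw [List.length_eq_zero_iff] at hlen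
        rw [hlen]
      have e2 : Q.support = [s] := by
        have hc := Q.support_eq_cons
        have hlen : Q.support.length = 1 := by
          rw [SimpleGraph.Walk.length_support, hQ, h0]
        rw [hc] at hlen ⊢
        simp only [List.length_cons, Nat.add_eq_right, Nat.succ.injEq] at hlen
        rw [List.length_eq_zero_iff] at hlen
        rw [hlen]
      rw [e1, e2]
    refine Relation.ReflTransGen.single ⟨hP.trans hd.symm, hQ.trans hd.symm, ?_⟩
    refine ⟨by rw [SimpleGraph.Walk.length_support, SimpleGraph.Walk.length_support, hP, hQ],
      1, d - 1, by omega, le_refl 1,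
      by rw [SimpleGraph.Walk.length_support, hP]; omega, ?_⟩
    intro j hj
    rw [KRAux.support_getElem?, KRAux.support_getElem?, hP, hQ]
    by_cases hjd : j ≤ d
    · rw [if_pos hjd, if_pos hjd]
      have hcase : j = 0 ∨ j = d := by omega
      rcases hcase with h | h
      · subst h; rw [SimpleGraph.Walk.getVert_zero, SimpleGraph.Walk.getVert_zero]
      · subst h
        rw [SimpleGraph.Walk.getVert_of_length_le _ (le_of_eq hP),
          SimpleGraph.Walk.getVert_of_length_le _ (le_of_eq hQ)]
    · rw [if_neg hjd, if_neg hjd]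
  · -- two moves
    push_neg at hdk
    have hdP : ∀ i ≤ d, G.dist s (P.getVert i) = i ∧ G.dist (P.getVert i) t = d - i := by
      intro i hi
      have := KRAux.dist_getVert P (hP.trans hd.symm) (i := i) (by omega)
      rwa [hP] at this
    have hdQ : ∀ i ≤ d, G.dist s (Q.getVert i) = i ∧ G.dist (Q.getVert i) t = d - i := by
      intro i hi
      have := KRAux.dist_getVert Q (hQ.trans hd.symm) (i := i) (by omega)
      rwa [hQ] at this
    set S : Finset ℕ := (Finset.range (d + 1)).filter (fun i => P.getVert i = Q.getVert i)
      with hS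
    have hSsub : S ⊆ Finset.range (d + 1) := Finset.filter_subset _ _
    have hinjP : Set.InjOn (fun i => P.getVert i) (Finset.range (d + 1)) := by
      intro a ha b hb hab
      rw [Finset.mem_coe, Finset.mem_range] at ha hb
      have h1 : G.dist s (P.getVert a) = a := (hdP a (by omega)).1
      have h2 : G.dist s (P.getVert b) = b := (hdP b (by omega)).1
      rw [show P.getVert a = P.getVert b from hab] at h1; omega
    have hinjQ : Set.InjOn (fun i => Q.getVert i)
        ((((Finset.range (d + 1)) \ S : Finset ℕ) : Set ℕ)) := by
      intro a ha b hb hab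
      rw [Finset.mem_coe, Finset.mem_sdiff, Finset.mem_range] at ha hb
      have h1 : G.dist s (Q.getVert a) = a := (hdQ a (by omega)).1
      have h2 : G.dist s (Q.getVert b) = b := (hdQ b (by omega)).1
      rw [show Q.getVert a = Q.getVert b from hab] at h1; omega
    have hdisj : Disjoint ((Finset.range (d + 1)).image (fun i => P.getVert i))
        (((Finset.range (d + 1)) \ S).image (fun i => Q.getVert i)) := by
      rw [Finset.disjoint_left]
      rintro x hx hx'
      simp only [Finset.mem_image, Finset.mem_range, Finset.mem_sdiff] at hx hx'
      obtain ⟨a, ha, rfl⟩ := hx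
      obtain ⟨b, ⟨hb, hbS⟩, hbe⟩ := hx'
      have h1 : G.dist s (P.getVert a) = a := (hdP a (by omega)).1
      have h2 : G.dist s (Q.getVert b) = b := (hdQ b (by omega)).1
      rw [hbe] at h2
      have hab : a = b := by omega
      subst hab
      exact hbS (by rw [hS, Finset.mem_filter, Finset.mem_range]; exact ⟨hb, hbe.symm⟩)
    have hcardP : ((Finset.range (d + 1)).image (fun i => P.getVert i)).card = d + 1 := by
      rw [Finset.card_image_of_injOn hinjP, Finset.card_range]
    have hcardQ : (((Finset.range (d + 1)) \ S).image (fun i => Q.getVert i)).card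
        = (d + 1) - S.card := by
      rw [Finset.card_image_of_injOn hinjQ, Finset.card_sdiff_of_subset hSsub, Finset.card_range]
    have hScard : 2 * d + 2 ≤ n + S.card := by
      have hun := Finset.card_union_of_disjoint hdisj
      have hle : (((Finset.range (d + 1)).image (fun i => P.getVert i)) ∪
          (((Finset.range (d + 1)) \ S).image (fun i => Q.getVert i))).card ≤ n := by
        rw [← hn]; exact Finset.card_le_univ _
      have hSle : S.card ≤ d + 1 := by
        have := Finset.card_le_card hSsub
        rwa [Finset.card_range] at this
      rw [hun, hcardP, hcardQ] at hle
      omega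
    have hbad : ¬ S ⊆ Finset.range (d - k - 1) ∪ Finset.Ico (k + 2) (d + 1) := by
      intro hsub
      have h1 := Finset.card_le_card hsub
      have h2 := Finset.card_union_le (Finset.range (d - k - 1)) (Finset.Ico (k + 2) (d + 1))
      rw [Finset.card_range, Nat.card_Ico] at h2
      omega
    obtain ⟨i, hiS, hiB⟩ := Finset.not_subset.mp hbad
    rw [hS, Finset.mem_filter, Finset.mem_range] at hiS
    obtain ⟨hid, hieq⟩ := hiS
    simp only [Finset.mem_union, Finset.mem_range, Finset.mem_Ico, not_or, not_and,
      not_lt] at hiB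
    have hi1 : d - k - 1 ≤ i := hiB.1
    have hi2 : i ≤ k + 1 := by
      by_contra h
      have := hiB.2 (by omega)
      omega
    have hilb : 1 ≤ i := by omega
    have hiub : i ≤ d - 1 := by omega
    set v := P.getVert i with hv
    have hvP : v ∈ P.support := KRAux.getVert_mem_support P i
    have hvQ : v ∈ Q.support := by rw [hieq]; exact KRAux.getVert_mem_support Q i
    have hdsv : G.dist s v = i := (hdP i (by omega)).1
    have hdvt : G.dist v t = d - i := (hdP i (by omega)).2
    have hsplitP := SimpleGraph.Walk.take_spec P hvP
    have hsplitQ := SimpleGraph.Walk.take_spec Q hvQ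
    have hlensP : (P.takeUntil v hvP).length + (P.dropUntil v hvP).length = d := by
      have := congrArg SimpleGraph.Walk.length hsplitP
      rwa [SimpleGraph.Walk.length_append, hP] at this
    have hlensQ : (Q.takeUntil v hvQ).length + (Q.dropUntil v hvQ).length = d := by
      have := congrArg SimpleGraph.Walk.length hsplitQ
      rwa [SimpleGraph.Walk.length_append, hQ] at this
    have h1P := SimpleGraph.dist_le (P.takeUntil v hvP)
    have h2P := SimpleGraph.dist_le (P.dropUntil v hvP)
    have h1Q := SimpleGraph.dist_le (Q.takeUntil v hvQ)
    have h2Q := SimpleGraph.dist_le (Q.dropUntil v hvQ)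
    rw [hdsv] at h1P h1Q
    rw [hdvt] at h2P h2Q
    have hAP : (P.takeUntil v hvP).length = i := by omega
    have hBP : (P.dropUntil v hvP).length = d - i := by omega
    have hAQ : (Q.takeUntil v hvQ).length = i := by omega
    set R : G.Walk s t := (Q.takeUntil v hvQ).append (P.dropUntil v hvP) with hR
    have hRlen : R.length = d := by
      rw [hR, SimpleGraph.Walk.length_append, hAQ, hBP]; omega
    have hRget : ∀ j, R.getVert j = if j < i then (Q.takeUntil v hvQ).getVert j
        else (P.dropUntil v hvP).getVert (j - i) := by
      intro j; rw [hR, SimpleGraph.Walk.getVert_append, hAQ]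
    have hPget : ∀ j, P.getVert j = if j < i then (P.takeUntil v hvP).getVert j
        else (P.dropUntil v hvP).getVert (j - i) := by
      intro j
      conv_lhs => rw [← hsplitP]
      rw [SimpleGraph.Walk.getVert_append, hAP]
    have hQget : ∀ j, Q.getVert j = if j < i then (Q.takeUntil v hvQ).getVert j
        else (Q.dropUntil v hvQ).getVert (j - i) := by
      intro j
      conv_lhs => rw [← hsplitQ]
      rw [SimpleGraph.Walk.getVert_append, hAQ]
    have move1 : kMove k P.support R.support := by
      refine ⟨by rw [SimpleGraph.Walk.length_support, SimpleGraph.Walk.length_support, hP,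
        hRlen], 1, i - 1, by omega, le_refl 1,
        by rw [SimpleGraph.Walk.length_support, hP]; omega, ?_⟩
      intro j hj
      rw [KRAux.support_getElem?, KRAux.support_getElem?, hP, hRlen]
      by_cases hjd : j ≤ d
      · rw [if_pos hjd, if_pos hjd]
        congr 1
        rcases hj with hj | hj
        · have hj0 : j = 0 := by omega
          subst hj0
          rw [SimpleGraph.Walk.getVert_zero, SimpleGraph.Walk.getVert_zero]
        · have hij : i ≤ j := by omega
          rw [hPget j, hRget j, if_neg (by omega), if_neg (by omega)]
      · rw [if_neg hjd, if_neg hjd]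
    have move2 : kMove k R.support Q.support := by
      refine ⟨by rw [SimpleGraph.Walk.length_support, SimpleGraph.Walk.length_support, hRlen,
        hQ], i + 1, d - 1 - i, by omega, by omega,
        by rw [SimpleGraph.Walk.length_support, hRlen]; omega, ?_⟩
      intro j hj
      rw [KRAux.support_getElem?, KRAux.support_getElem?, hRlen, hQ]
      by_cases hjd : j ≤ d
      · rw [if_pos hjd, if_pos hjd]
        congr 1
        rcases hj with hj | hj
        · by_cases hji : j < i
          · rw [hRget j, hQget j, if_pos hji, if_pos hji]
          · have hji' : j = i := by omega
            subst hji'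
            rw [hRget j, if_neg (by omega), Nat.sub_self, SimpleGraph.Walk.getVert_zero]
            exact hieq
        · have hjd' : j = d := by omega
          subst hjd'
          rw [SimpleGraph.Walk.getVert_of_length_le R (le_of_eq hRlen),
            SimpleGraph.Walk.getVert_of_length_le Q (le_of_eq hQ)]
      · rw [if_neg hjd, if_neg hjd]
    exact Relation.ReflTransGen.head ⟨hP.trans hd.symm, hRlen.trans hd.symm, move1⟩
      (Relation.ReflTransGen.single ⟨hRlen.trans hd.symm, hQ.trans hd.symm, move2⟩)
end

section
/- For all positive integers g and l, there exists a simple graph G on exactly 1 + g(l + 1) vertices with two vertices s and t such that the graph distance d(s,t) equals 2g and the number of distinct s–t shortest paths in G is exactly l^g. (Such a graph is obtained by chaining g gadgets in series: take vertices u_0 = s, u_1, …, u_g = t, and for each i ∈ {1,…,g} a set A_i of l additional vertices each adjacent to both u_{i−1} and u_i, with no other edges.) -/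
open SimpleGraph

variable {g l : ℕ}

def gadget (g l : ℕ) : SimpleGraph (Fin (g + 1) ⊕ Fin g × Fin l) where
  Adj a b :=
    match a, b with
    | .inl i, .inr (j, _) => (i : ℕ) = j ∨ (i : ℕ) = (j : ℕ) + 1
    | .inr (j, _), .inl i => (i : ℕ) = j ∨ (i : ℕ) = (j : ℕ) + 1
    | _, _ => False
  symm := ⟨by rintro (i | ⟨j, k⟩) (i' | ⟨j', k'⟩) h <;> exact h⟩
  loopless := ⟨by rintro (i | ⟨j, k⟩) h <;> exact h⟩

def grank : Fin (g + 1) ⊕ Fin g × Fin l → ℕ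
  | .inl i => 2 * i
  | .inr (j, _) => 2 * j + 1

lemma grank_adj {a b : Fin (g + 1) ⊕ Fin g × Fin l} (h : (gadget g l).Adj a b) :
    grank b = grank a + 1 ∨ grank a = grank b + 1 := by
  rcases a with i | ⟨j, k⟩ <;> rcases b with i' | ⟨j', k'⟩ <;>
    simp only [gadget] at h <;> rcases h with h | h <;> simp [grank] <;> omega

lemma grank_walk_le {a b : Fin (g + 1) ⊕ Fin g × Fin l} (p : (gadget g l).Walk a b) :
    grank b ≤ grank a + p.length ∧ grank a ≤ grank b + p.length := by
  induction p with
  | nil => simp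
  | cons h q ih =>
    rcases grank_adj h with h' | h' <;> simp only [Walk.length_cons] <;> omega

lemma grank_getVert {a b : Fin (g + 1) ⊕ Fin g × Fin l} (p : (gadget g l).Walk a b)
    (hp : grank a + p.length = grank b) : ∀ i ≤ p.length, grank (p.getVert i) = grank a + i := by
  induction p with
  | nil =>
    intro i hi
    simp only [Walk.length_nil, Nat.le_zero] at hi
    subst hi; simp
  | @cons a c b h q ih =>
    have hq := grank_walk_le q
    have hc : grank c = grank a + 1 := by
      rcases grank_adj h with h' | h' <;> simp only [Walk.length_cons] at hp <;> omega
    intro i hi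
    match i with
    | 0 => simp
    | (i + 1) =>
      rw [Walk.getVert_cons_succ]
      have := ih (by simp only [Walk.length_cons] at hp; omega) i
        (by simp only [Walk.length_cons] at hi; omega)
      omega

lemma eq_inl_of_grank {v : Fin (g + 1) ⊕ Fin g × Fin l} {j : ℕ} (hj : j ≤ g)
    (h : grank v = 2 * j) : v = Sum.inl ⟨j, by omega⟩ := by
  rcases v with i | ⟨i, k⟩
  · simp only [grank] at h
    have : (i : ℕ) = j := by omega
    congr 1
    exact Fin.ext (by simpa using this)
  · simp only [grank] at h; omega

lemma eq_inr_of_grank {v : Fin (g + 1) ⊕ Fin g × Fin l} {j : ℕ}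
    (h : grank v = 2 * j + 1) : ∃ (hj : j < g) (k : Fin l), v = Sum.inr (⟨j, hj⟩, k) := by
  rcases v with i | ⟨i, k⟩
  · simp only [grank] at h; omega
  · simp only [grank] at h
    have hij : (i : ℕ) = j := by omega
    exact ⟨hij ▸ i.isLt, k, by congr 1; exact Prod.ext (Fin.ext (by simpa using hij)) rfl⟩

lemma walk_ext {α : Type*} {G : SimpleGraph α} :
    ∀ {u v : α} (p q : G.Walk u v), p.length = q.length →
      (∀ i, p.getVert i = q.getVert i) → p = q := by
  intro u v p
  induction p with
  | nil =>
    intro q hl _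
    cases q with
    | nil => rfl
    | cons h q => simp at hl
  | @cons a c b h p ih =>
    intro q hl hv
    cases q with
    | nil => simp at hl
    | @cons _ c' _ h' q =>
      have hc : c = c' := by
        have := hv 1
        simpa [Walk.getVert_cons_succ, Walk.getVert_zero] using this
      subst hc
      rw [ih q (by simpa using hl) fun i => by simpa [Walk.getVert_cons_succ] using hv (i + 1)]

def buildAux (c : ℕ → Fin l) : (k m : ℕ) → (h : m + k = g) →
    (gadget g l).Walk (Sum.inl ⟨m, by omega⟩) (Sum.inl (Fin.last g))
  | 0, m, h => Walk.nil.copy (congrArg Sum.inl (Fin.ext (by simp [Fin.last]; omega))) rfl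
  | k + 1, m, h =>
    Walk.cons
      (show (gadget g l).Adj (Sum.inl ⟨m, by omega⟩) (Sum.inr (⟨m, by omega⟩, c m)) from
        Or.inl rfl)
      (Walk.cons
        (show (gadget g l).Adj (Sum.inr (⟨m, by omega⟩, c m)) (Sum.inl ⟨m + 1, by omega⟩) from
          Or.inr rfl)
        (buildAux c k (m + 1) (by omega)))

lemma buildAux_length (c : ℕ → Fin l) : ∀ (k m : ℕ) (h : m + k = g),
    (buildAux c k m h).length = 2 * k
  | 0, m, h => by simp [buildAux]
  | k + 1, m, h => by
    simp only [buildAux, Walk.length_cons, buildAux_length c k (m + 1)]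
    omega

lemma buildAux_getVert_odd (c : ℕ → Fin l) : ∀ (k m : ℕ) (h : m + k = g) (i : ℕ) (hik : i < k),
    (buildAux c k m h).getVert (2 * i + 1) =
      Sum.inr (⟨m + i, by omega⟩, c (m + i))
  | 0, m, h, i, hi => by omega
  | k + 1, m, h, 0, hi => by
    simp only [buildAux, Nat.mul_zero, Nat.zero_add, Walk.getVert_cons_succ, Walk.getVert_zero]
    congr 1
  | k + 1, m, h, i + 1, hi => by
    have e : 2 * (i + 1) + 1 = (2 * i + 1) + 1 + 1 := by ring
    rw [e]
    simp only [buildAux, Walk.getVert_cons_succ]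
    rw [buildAux_getVert_odd c k (m + 1) (by omega) i (by omega)]
    congr 1
    exact Prod.ext (Fin.ext (by simp; omega)) (congrArg c (by omega))

lemma walk_finite {α : Type*} [Finite α] {G : SimpleGraph α} (u v : α) (n : ℕ) :
    Finite {p : G.Walk u v // p.length = n} := by
  apply Finite.of_injective (fun p (i : Fin (n + 1)) => p.1.getVert i)
  intro p q hpq
  apply Subtype.ext
  apply walk_ext _ _ (by rw [p.2, q.2])
  intro i
  rcases le_or_gt i n with hi | hi
  · exact congrFun hpq ⟨i, by omega⟩
  · rw [Walk.getVert_of_length_le _ (by omega : p.1.length ≤ i),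
      Walk.getVert_of_length_le _ (by omega : q.1.length ≤ i)]

lemma card_walk_iso {α β : Type*} [Finite α] [Finite β] {G : SimpleGraph α}
    {G' : SimpleGraph β} (φ : G ≃g G') (u v : α) (n : ℕ) :
    Nat.card {p : G'.Walk (φ u) (φ v) // p.length = n} =
      Nat.card {p : G.Walk u v // p.length = n} := by
  have h1 : Function.Injective
      (fun p : {p : G.Walk u v // p.length = n} =>
        (⟨p.1.map φ.toHom, by simp [p.2]⟩ : {q : G'.Walk (φ u) (φ v) // q.length = n})) := by
    intro p q h
    exact Subtype.ext (Walk.map_injective_of_injective φ.injective u v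
      (congrArg Subtype.val h))
  have h2 : Function.Injective
      (fun q : {q : G'.Walk (φ u) (φ v) // q.length = n} =>
        (⟨q.1.map φ.symm.toHom, by simp [q.2]⟩ :
          {p : G.Walk (φ.symm (φ u)) (φ.symm (φ v)) // p.length = n})) := by
    intro p q h
    exact Subtype.ext (Walk.map_injective_of_injective φ.symm.injective _ _
      (congrArg Subtype.val h))
  have := walk_finite (G := G') (φ u) (φ v) n
  have := walk_finite (G := G) u v n
  have := walk_finite (G := G) (φ.symm (φ u)) (φ.symm (φ v)) n
  refine le_antisymm ?_ (Nat.card_le_card_of_injective _ h1)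
  have h3 := Nat.card_le_card_of_injective _ h2
  rwa [RelIso.symm_apply_apply, RelIso.symm_apply_apply] at h3

lemma dist_iso {α β : Type*} {G : SimpleGraph α} {G' : SimpleGraph β} (φ : G ≃g G')
    {u v : α} (h : G.Reachable u v) : G'.dist (φ u) (φ v) = G.dist u v := by
  obtain ⟨p, hp⟩ := h.exists_walk_length_eq_dist
  refine le_antisymm (by
    calc G'.dist (φ u) (φ v) ≤ (p.map φ.toHom).length := dist_le _
    _ = G.dist u v := by rw [Walk.length_map, hp]) ?_
  have h' : G'.Reachable (φ u) (φ v) := ⟨p.map φ.toHom⟩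
  obtain ⟨q, hq⟩ := h'.exists_walk_length_eq_dist
  calc G.dist u v = G.dist (φ.symm (φ u)) (φ.symm (φ v)) := by
        rw [RelIso.symm_apply_apply, RelIso.symm_apply_apply]
    _ ≤ (q.map φ.symm.toHom).length := dist_le _
    _ = G'.dist (φ u) (φ v) := by rw [Walk.length_map, hq]

lemma gadget_dist (hl : 1 ≤ l) :
    (gadget g l).dist (Sum.inl ⟨0, Nat.succ_pos g⟩) (Sum.inl (Fin.last g)) = 2 * g := by
  have hex : ∃ p : (gadget g l).Walk (Sum.inl ⟨0, Nat.succ_pos g⟩) (Sum.inl (Fin.last g)),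
      p.length = 2 * g :=
    ⟨buildAux (fun _ => ⟨0, hl⟩) g 0 (Nat.zero_add g), buildAux_length _ g 0 (Nat.zero_add g)⟩
  obtain ⟨p0, hp0⟩ := hex
  refine le_antisymm (hp0 ▸ dist_le p0) ?_
  obtain ⟨q, hq⟩ := (Reachable.exists_walk_length_eq_dist ⟨p0⟩ : _)
  have h1 := (grank_walk_le q).1
  have hrs : grank (Sum.inl (⟨0, Nat.succ_pos g⟩ : Fin (g + 1)) :
      Fin (g + 1) ⊕ Fin g × Fin l) = 0 := by simp [grank]
  have hrt : grank (Sum.inl (Fin.last g) : Fin (g + 1) ⊕ Fin g × Fin l) = 2 * g := by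
    simp [grank, Fin.last]
  omega

/-- Lift a choice function `Fin g → Fin l` to `ℕ → Fin l`. -/
def liftc (hl : 1 ≤ l) (c : Fin g → Fin l) (n : ℕ) : Fin l :=
  if h : n < g then c ⟨n, h⟩ else ⟨0, hl⟩

/-- The canonical shortest walk determined by a choice function. -/
def Fmap (hl : 1 ≤ l) (c : Fin g → Fin l) :
    (gadget g l).Walk (Sum.inl ⟨0, Nat.succ_pos g⟩) (Sum.inl (Fin.last g)) :=
  buildAux (liftc hl c) g 0 (Nat.zero_add g)

lemma Fmap_length (hl : 1 ≤ l) (c : Fin g → Fin l) : (Fmap hl c).length = 2 * g :=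
  buildAux_length _ g 0 (Nat.zero_add g)

lemma Fmap_getVert_odd (hl : 1 ≤ l) (c : Fin g → Fin l) (i : Fin g) :
    (Fmap hl c).getVert (2 * (i : ℕ) + 1) = Sum.inr (⟨(i : ℕ), i.isLt⟩, c i) := by
  have h := buildAux_getVert_odd (liftc hl c) g 0 (Nat.zero_add g) i i.isLt
  rw [Fmap, h]
  congr 1
  refine Prod.ext (Fin.ext (by simp)) ?_
  show liftc hl c (0 + i) = c i
  rw [liftc, dif_pos (show 0 + (i : ℕ) < g by omega)]
  congr 1
  exact Fin.ext (by simp)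

lemma gadget_card (hl : 1 ≤ l) :
    Nat.card {p : (gadget g l).Walk (Sum.inl ⟨0, Nat.succ_pos g⟩) (Sum.inl (Fin.last g)) //
      p.length = 2 * g} = l ^ g := by
  classical
  have hrs : grank (Sum.inl (⟨0, Nat.succ_pos g⟩ : Fin (g + 1)) :
      Fin (g + 1) ⊕ Fin g × Fin l) = 0 := by simp [grank]
  have key := Nat.card_eq_of_bijective
    (fun c : Fin g → Fin l =>
      (⟨Fmap hl c, Fmap_length hl c⟩ :
        {p : (gadget g l).Walk (Sum.inl ⟨0, Nat.succ_pos g⟩) (Sum.inl (Fin.last g)) //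
          p.length = 2 * g}))
    ⟨by
      intro c c' hcc
      funext i
      have h0 : (Fmap hl c).getVert (2 * (i : ℕ) + 1) =
          (Fmap hl c').getVert (2 * (i : ℕ) + 1) := by
        have := congrArg Subtype.val hcc
        simp only [] at this
        rw [this]
      rw [Fmap_getVert_odd, Fmap_getVert_odd] at h0
      injection h0 with h4
      exact ((Prod.mk.injEq _ _ _ _).mp h4).2, by
      rintro ⟨p, hp⟩
      have hrank := grank_getVert p (by rw [hp]; simp [hrs, grank, Fin.last])
      have hodd : ∀ i : Fin g, ∃ k : Fin l,
          p.getVert (2 * (i : ℕ) + 1) = Sum.inr (⟨(i : ℕ), i.isLt⟩, k) := by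
        intro i
        have h1 : grank (p.getVert (2 * (i : ℕ) + 1)) = 2 * (i : ℕ) + 1 := by
          have := hrank (2 * (i : ℕ) + 1) (by omega)
          omega
        obtain ⟨hj, k, hk⟩ := eq_inr_of_grank h1
        exact ⟨k, hk⟩
      choose cfun hc using hodd
      refine ⟨cfun, Subtype.ext ?_⟩
      show Fmap hl cfun = p
      apply walk_ext _ _ (by rw [Fmap_length, hp])
      intro i
      by_cases hile : i ≤ 2 * g
      · rcases Nat.even_or_odd i with ⟨j, hj⟩ | ⟨j, hj⟩
        · -- even position
          have hjg : j ≤ g := by omega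
          have e1 : grank ((Fmap hl cfun).getVert i) = 2 * j := by
            have := grank_getVert (Fmap hl cfun)
              (by rw [Fmap_length]; simp [hrs, grank, Fin.last]) i
              (by rw [Fmap_length]; omega)
            omega
          have e2 : grank (p.getVert i) = 2 * j := by
            have := hrank i (by omega)
            omega
          rw [eq_inl_of_grank hjg e1, eq_inl_of_grank hjg e2]
        · -- odd position
          have hjg : j < g := by omega
          subst hj
          have h1 := Fmap_getVert_odd hl cfun ⟨j, hjg⟩
          have h2 := hc ⟨j, hjg⟩
          simp only [] at h1 h2
          rw [h1, h2]
      · rw [Walk.getVert_of_length_le _ (by rw [Fmap_length]; omega),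
          Walk.getVert_of_length_le _ (by omega : p.length ≤ i)]⟩
  rw [← key, Nat.card_eq_fintype_card]
  simp



/-- For all positive integers `g` and `l` there is a simple graph on exactly
`1 + g * (l + 1)` vertices with vertices `s`, `t` such that `d(s,t) = 2g` and the
number of distinct `s`–`t` shortest paths is exactly `l ^ g`. -/
theorem exists_gadget_graph (g l : ℕ) (hg : 1 ≤ g) (hl : 1 ≤ l) :
    ∃ (G : SimpleGraph (Fin (1 + g * (l + 1)))) (s t : Fin (1 + g * (l + 1))),
      G.dist s t = 2 * g ∧
        Nat.card {p : G.Walk s t // p.length = G.dist s t} = l ^ g := by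
  have e : (Fin (g + 1) ⊕ Fin g × Fin l) ≃ Fin (1 + g * (l + 1)) :=
    Fintype.equivFinOfCardEq (by simp; ring)
  set G' := SimpleGraph.comap (⇑e.symm.toEmbedding) (gadget g l) with hG'
  set φ := Iso.comap e.symm (gadget g l) with hφ
  set s₀ : Fin (g + 1) ⊕ Fin g × Fin l := Sum.inl ⟨0, Nat.succ_pos g⟩ with hs₀
  set t₀ : Fin (g + 1) ⊕ Fin g × Fin l := Sum.inl (Fin.last g) with ht₀
  have hφs : φ (e s₀) = s₀ := Equiv.symm_apply_apply e s₀
  have hφt : φ (e t₀) = t₀ := Equiv.symm_apply_apply e t₀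
  have hreach : G'.Reachable (e s₀) (e t₀) := by
    have p0 : (gadget g l).Walk s₀ t₀ := buildAux (fun _ => ⟨0, hl⟩) g 0 (Nat.zero_add g)
    have : G'.Reachable (φ.symm s₀) (φ.symm t₀) := ⟨p0.map φ.symm.toHom⟩
    simpa [hφ] using this
  have hdist : G'.dist (e s₀) (e t₀) = 2 * g := by
    have h1 := dist_iso φ hreach
    rw [hφs, hφt] at h1
    exact h1.symm.trans (gadget_dist hl)
  refine ⟨G', e s₀, e t₀, hdist, ?_⟩
  rw [hdist]
  have h2 := card_walk_iso φ (e s₀) (e t₀) (2 * g)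
  rw [hφs, hφt] at h2
  exact h2.symm.trans (gadget_card hl)
end
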